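/- arXiv:1911.07691 — 4 statements merged into one kernel-verified Lean document; each statement's English description precedes it below -/
import Mathlib

section
/- Let k be a field, Γ the Kronecker quiver (two arrows p, q from vertex u to vertex v), and kΓ its path algebra. The functor sending a linear relation (V, R) to the representation (π_p, π_q : R → V), where π_p and π_q are the restrictions to R of the two projections V ⊕ V → V, is a fully faithful additive functor from the category of linear relations to the category of k-representations of Γ. -/
section

variable {k : Type*} [Field k]

/-- A morphism of linear relations `(V, R) → (W, S)`: a linear map preserving the relation. -/
def IsRelHom {V W : Type*} [AddCommGroup V] [Module k V] [AddCommGroup W] [Module k W]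
    (R : Submodule k (V × V)) (S : Submodule k (W × W)) (f : V →ₗ[k] W) : Prop :=
  ∀ x ∈ R, ((f x.1, f x.2) : W × W) ∈ S

/-- A morphism of Kronecker representations `(π₁, π₂ : R → V) → (π₁, π₂ : S → W)`:
a pair `(a, b)` of linear maps commuting with the two projections. -/
def IsKroneckerHom {V W : Type*} [AddCommGroup V] [Module k V] [AddCommGroup W] [Module k W]
    (R : Submodule k (V × V)) (S : Submodule k (W × W))
    (a : ↥R →ₗ[k] ↥S) (b : V →ₗ[k] W) : Prop :=
  ∀ x : ↥R, ((a x : W × W)).1 = b ((x : V × V)).1 ∧ ((a x : W × W)).2 = b ((x : V × V)).2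

end

/-- The functor `k-Rel → k-Rep(Γ)` sending a linear relation `(V, R)` to the
Kronecker representation `(π_p, π_q : R → V)`, and a morphism `f` to the pair
`(f|_R, f)`, is fully faithful and additive.  Concretely, on each hom-set:
every relation morphism `f` induces a (unique) Kronecker morphism `(a, f)`;
every Kronecker morphism `(a, b)` arises this way (fullness: `b` is a relation
morphism and `a` is determined by `b`); faithfulness is the uniqueness of the
second component; and the assignment is additive. -/
theorem stmt4 (k : Type*) [Field k] (V W : Type*)
    [AddCommGroup V] [Module k V] [AddCommGroup W] [Module k W]
    (R : Submodule k (V × V)) (S : Submodule k (W × W)) :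
    -- the functor is well defined on morphisms
    (∀ f : V →ₗ[k] W, IsRelHom R S f → ∃ a : ↥R →ₗ[k] ↥S, IsKroneckerHom R S a f) ∧
    -- faithfulness (and uniqueness of the induced pair)
    (∀ (a a' : ↥R →ₗ[k] ↥S) (b : V →ₗ[k] W),
      IsKroneckerHom R S a b → IsKroneckerHom R S a' b → a = a') ∧
    -- fullness: every Kronecker morphism comes from a relation morphism
    (∀ (a : ↥R →ₗ[k] ↥S) (b : V →ₗ[k] W), IsKroneckerHom R S a b → IsRelHom R S b) ∧
    -- additivity
    (∀ (a a' : ↥R →ₗ[k] ↥S) (b b' : V →ₗ[k] W),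
      IsKroneckerHom R S a b → IsKroneckerHom R S a' b' →
        IsKroneckerHom R S (a + a') (b + b')) := by
  refine ⟨?_, ?_, ?_, ?_⟩
  · intro f hf
    refine ⟨{ toFun := fun x => ⟨(f (x : V × V).1, f (x : V × V).2), hf x x.2⟩
              map_add' := ?_, map_smul' := ?_ }, fun x => ⟨rfl, rfl⟩⟩
    · intro x y; ext <;> simp
    · intro c x; ext <;> simp
  · intro a a' b h h'
    ext x
    · rw [(h x).1, (h' x).1]
    · rw [(h x).2, (h' x).2]
  · intro a b h x hx
    have := h ⟨x, hx⟩
    have hm := (a ⟨x, hx⟩).2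
    rw [← this.1, ← this.2]
    simp
  · intro a a' b b' h h' x
    have h1 := h x; have h2 := h' x
    constructor <;> simp [h1.1, h1.2, h2.1, h2.2]
end

section
/- Let Λ be a finite-dimensional algebra over a field k and let M be a complex of projective Λ-modules with im(d^n) ⊆ rad(M^{n+1}) for all n (a homotopically minimal complex). If a chain endomorphism τ of M is homotopic to the identity, then each component τ^n : M^n → M^n is an isomorphism of Λ-modules. -/
open CategoryTheory

universe u

section Aux

variable {R : Type*} [Ring R]

lemma aux_jac_mul_right {x y : R} (hx : x ∈ Ideal.jacobson (⊥ : Ideal R)) :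
    x * y ∈ Ideal.jacobson (⊥ : Ideal R) :=
  Ideal.mul_mem_right y _ hx

lemma aux_left_inv {a : R} (ha : a ∈ Ideal.jacobson (⊥ : Ideal R)) :
    ∃ z : R, z * (1 - a) = 1 := by
  obtain ⟨z, hz⟩ := Ideal.mem_jacobson_iff.mp ha (-1)
  rw [Ideal.mem_bot, sub_eq_zero] at hz
  refine ⟨z, ?_⟩
  calc z * (1 - a) = z * (-1) * a + z := by noncomm_ring
  _ = 1 := hz

lemma aux_smul_singleton {M : Type*} [AddCommGroup M] [Module R M] {x y : M}
    (hy : y ∈ Ideal.jacobson (⊥ : Ideal R) • (Submodule.span R {x})) :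
    ∃ a ∈ Ideal.jacobson (⊥ : Ideal R), y = a • x := by
  refine Submodule.smul_induction_on hy ?_ ?_
  · intro r hr nn hn
    obtain ⟨c, rfl⟩ := Submodule.mem_span_singleton.mp hn
    exact ⟨r * c, aux_jac_mul_right hr, (mul_smul r c x).symm⟩
  · rintro y z ⟨a, ha, rfl⟩ ⟨b, hb, rfl⟩
    exact ⟨a + b, add_mem ha hb, (add_smul a b x).symm⟩

lemma aux_nakayama {M : Type*} [AddCommGroup M] [Module R M] (s : Finset M)
    (h : Submodule.span R (s : Set M) ≤
      Ideal.jacobson (⊥ : Ideal R) • Submodule.span R (s : Set M)) :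
    Submodule.span R (s : Set M) = ⊥ := by
  classical
  induction s using Finset.induction_on with
  | empty => simp
  | @insert x t hxt ih =>
    rw [Finset.coe_insert] at h ⊢
    have hx : x ∈ Submodule.span R (insert x (t : Set M)) :=
      Submodule.subset_span (Set.mem_insert _ _)
    have hmem := h hx
    rw [Submodule.span_insert, Submodule.smul_sup] at hmem
    obtain ⟨u, hu, v, hv, huv⟩ := Submodule.mem_sup.mp hmem
    obtain ⟨a, ha, rfl⟩ := aux_smul_singleton hu
    have hv' : v ∈ Submodule.span R (t : Set M) := Submodule.smul_le_right hv
    obtain ⟨z, hz⟩ := aux_left_inv ha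
    have h1 : (1 - a) • x = v := by
      rw [sub_smul, one_smul, sub_eq_iff_eq_add']
      exact huv.symm
    have hxspan : x ∈ Submodule.span R (t : Set M) := by
      have h2 : x = z • v := by rw [← h1, smul_smul, hz, one_smul]
      rw [h2]; exact Submodule.smul_mem _ z hv'
    rw [Submodule.span_insert_eq_span hxspan] at h ⊢
    exact ih h

lemma aux_pow_smul_mono {M : Type*} [AddCommGroup M] [Module R M] (I : Ideal R)
    (K : Submodule R M) (h : K ≤ I • K) (j : ℕ) :
    K ≤ (fun X : Ideal R => I • X)^[j] ⊤ • K := by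
  induction j with
  | zero => simp
  | succ j ih =>
    rw [Function.iterate_succ_apply', Submodule.smul_assoc]
    exact le_trans h (Submodule.smul_mono le_rfl ih)

lemma aux_pow_sup {M : Type*} [AddCommGroup M] [Module R M] (I : Ideal R)
    (N : Submodule R M) (h : ⊤ ≤ N ⊔ I • ⊤) (j : ℕ) :
    (⊤ : Submodule R M) ≤ N ⊔ (fun X : Ideal R => I • X)^[j] ⊤ • ⊤ := by
  induction j with
  | zero => simp
  | succ j ih =>
    rw [Function.iterate_succ_apply', Submodule.smul_assoc]
    have h2 : I • (⊤ : Submodule R M) ≤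
        N ⊔ I • ((fun X : Ideal R => I • X)^[j] ⊤ • ⊤) := by
      calc I • (⊤ : Submodule R M)
          ≤ I • (N ⊔ (fun X : Ideal R => I • X)^[j] ⊤ • ⊤) := Submodule.smul_mono le_rfl ih
        _ = I • N ⊔ I • ((fun X : Ideal R => I • X)^[j] ⊤ • ⊤) := Submodule.smul_sup _ _ _
        _ ≤ N ⊔ I • ((fun X : Ideal R => I • X)^[j] ⊤ • ⊤) :=
            sup_le_sup_right Submodule.smul_le_right _
    exact le_trans h (sup_le le_sup_left h2)

end Aux

lemma aux_nilpotent (k : Type u) [Field k] (Λ : Type u) [Ring Λ] [Algebra k Λ]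
    [FiniteDimensional k Λ] :
    ∃ m : ℕ, (fun X : Ideal Λ => Ideal.jacobson (⊥ : Ideal Λ) • X)^[m] ⊤ = ⊥ := by
  classical
  set J := Ideal.jacobson (⊥ : Ideal Λ) with hJ
  set pow : ℕ → Ideal Λ := fun m => (fun X : Ideal Λ => J • X)^[m] ⊤ with hpow
  have hsucc : ∀ m, pow (m + 1) = J • pow m := fun m => Function.iterate_succ_apply' _ _ _
  have hanti : ∀ m, pow (m + 1) ≤ pow m := fun m => by
    rw [hsucc]; exact Submodule.smul_le_right
  haveI : IsArtinian Λ Λ := isArtinian_of_tower k inferInstance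
  haveI : IsNoetherian Λ Λ := isNoetherian_of_tower k inferInstance
  obtain ⟨m, hm⟩ := IsArtinian.monotone_stabilizes (R := Λ) (M := Λ)
    ⟨fun n => OrderDual.toDual (pow n),
     fun a b hab => antitone_nat_of_succ_le hanti hab⟩
  have hfix : pow m = J • pow m := by
    have h1 : pow m = pow (m + 1) := OrderDual.toDual_inj.mp (hm (m + 1) (by omega))
    rw [hsucc] at h1
    exact h1
  obtain ⟨s, hs⟩ := (IsNoetherian.noetherian (pow m) : (pow m).FG)
  have hle : Submodule.span Λ (s : Set Λ) ≤ J • Submodule.span Λ (s : Set Λ) := by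
    rw [hs]; exact le_of_eq hfix
  have hbot : pow m = ⊥ := by rw [← hs]; exact aux_nakayama s hle
  exact ⟨m, hbot⟩

/-- Let `Λ` be a finite-dimensional algebra over a field `k` and `M` a
homotopically minimal complex of projective `Λ`-modules (i.e. `im(d^n) ⊆ rad(M^{n+1})`
for all `n`, where `rad` is the Jacobson radical).  If a chain endomorphism `τ` of `M`
is homotopic to the identity, then every component `τ^n` is an isomorphism. -/
theorem stmt9 (k : Type u) [Field k] (Λ : Type u) [Ring Λ] [Algebra k Λ]
    [FiniteDimensional k Λ]
    (M : CochainComplex (ModuleCat.{u} Λ) ℤ)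
    (hproj : ∀ n : ℤ, Module.Projective Λ (M.X n))
    (hmin : ∀ n : ℤ, LinearMap.range (M.d n (n + 1)).hom ≤
      Ideal.jacobson (⊥ : Ideal Λ) • (⊤ : Submodule Λ (M.X (n + 1))))
    (τ : M ⟶ M) (hτ : Nonempty (Homotopy τ (𝟙 M))) :
    ∀ n : ℤ, Function.Bijective (τ.f n) := by
  intro n
  obtain ⟨h⟩ := hτ
  obtain ⟨m, hm⟩ := aux_nilpotent k Λ
  haveI := hproj n
  -- the homotopy identity in degree n
  have hd : dNext n h.hom = M.d n (n + 1) ≫ h.hom (n + 1) n := dNext_eq h.hom rfl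
  have hp : prevD n h.hom = h.hom n (n - 1) ≫ M.d (n - 1) n := prevD_eq h.hom (by simp)
  have hcomm := h.comm n
  rw [hd, hp, HomologicalComplex.id_f] at hcomm
  have hpt : ∀ x : M.X n, (τ.f n) x =
      h.hom (n + 1) n (M.d n (n + 1) x) + M.d (n - 1) n (h.hom n (n - 1) x) + x := by
    intro x
    rw [hcomm]
    rfl
  have hmin' : LinearMap.range (M.d (n - 1) n).hom ≤
      Ideal.jacobson (⊥ : Ideal Λ) • (⊤ : Submodule Λ (M.X n)) := by
    have h0 := hmin (n - 1)
    rw [show n - 1 + 1 = n by ring] at h0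
    exact h0
  set r : M.X n →ₗ[Λ] M.X n := (τ.f n).hom - LinearMap.id with hrdef
  have hrange : ∀ x : M.X n,
      r x ∈ Ideal.jacobson (⊥ : Ideal Λ) • (⊤ : Submodule Λ (M.X n)) := by
    intro x
    have hrx : r x = h.hom (n + 1) n (M.d n (n + 1) x) + M.d (n - 1) n (h.hom n (n - 1) x) := by
      have hre : r x = (τ.f n) x - x := rfl
      rw [hre, hpt x, add_sub_cancel_right]
    rw [hrx]
    refine add_mem ?_ ?_
    · have hdx : M.d n (n + 1) x ∈
          Ideal.jacobson (⊥ : Ideal Λ) • (⊤ : Submodule Λ (M.X (n + 1))) := hmin n ⟨x, rfl⟩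
      have hmem : h.hom (n + 1) n (M.d n (n + 1) x) ∈
          Submodule.map (h.hom (n + 1) n).hom
            (Ideal.jacobson (⊥ : Ideal Λ) • (⊤ : Submodule Λ (M.X (n + 1)))) := ⟨_, hdx, rfl⟩
      rw [Submodule.map_smul''] at hmem
      exact Submodule.smul_mono le_rfl le_top hmem
    · exact hmin' ⟨_, rfl⟩
  -- surjectivity
  have hsurj : Function.Surjective (τ.f n) := by
    have hsup : (⊤ : Submodule Λ (M.X n)) ≤
        LinearMap.range (τ.f n).hom ⊔
          Ideal.jacobson (⊥ : Ideal Λ) • (⊤ : Submodule Λ (M.X n)) := by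
      intro x _
      have hx : x = (τ.f n) x - r x := by
        have hre : r x = (τ.f n) x - x := rfl
        rw [hre]
        exact (sub_sub_cancel _ _).symm
      rw [hx]
      exact Submodule.sub_mem _ (Submodule.mem_sup_left ⟨x, rfl⟩)
        (Submodule.mem_sup_right (hrange x))
    have htop := aux_pow_sup (Ideal.jacobson (⊥ : Ideal Λ))
      (LinearMap.range (τ.f n).hom) hsup m
    rw [hm] at htop
    simp only [Submodule.bot_smul, sup_bot_eq] at htop
    exact LinearMap.range_eq_top.mp (le_antisymm le_top htop)
  -- injectivity
  obtain ⟨s, hsec⟩ := Module.projective_lifting_property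
    (τ.f n).hom LinearMap.id hsurj
  have hseceq : ∀ x : M.X n, (τ.f n) (s x) = x := fun x => DFunLike.congr_fun hsec x
  set p : M.X n →ₗ[Λ] M.X n := LinearMap.id - s.comp (τ.f n).hom with hpdef
  have hτp : ∀ x : M.X n, (τ.f n) (p x) = 0 := by
    intro x
    have hp1 : p x = x - s ((τ.f n) x) := rfl
    rw [hp1, map_sub, hseceq, sub_self]
  have hpr : ∀ x : M.X n, p x = - r (p x) := by
    intro x
    have h1 : r (p x) = (τ.f n) (p x) - p x := rfl
    rw [hτp x, zero_sub] at h1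
    rw [h1, neg_neg]
  have hpJ : ∀ x : M.X n, p x ∈ Ideal.jacobson (⊥ : Ideal Λ) • (⊤ : Submodule Λ (M.X n)) := by
    intro x
    rw [hpr x]
    exact neg_mem (hrange (p x))
  have hKfix : ∀ x ∈ LinearMap.ker (τ.f n).hom, p x = x := by
    intro x hx
    have hp1 : p x = x - s ((τ.f n) x) := rfl
    rw [hp1, LinearMap.mem_ker.mp hx, map_zero, sub_zero]
  have hKle : LinearMap.ker (τ.f n).hom ≤
      Ideal.jacobson (⊥ : Ideal Λ) • LinearMap.ker (τ.f n).hom := by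
    intro x hx
    have hx1 : x ∈ Ideal.jacobson (⊥ : Ideal Λ) • (⊤ : Submodule Λ (M.X n)) := by
      rw [← hKfix x hx]; exact hpJ x
    have hmem : p x ∈ Submodule.map p
        (Ideal.jacobson (⊥ : Ideal Λ) • (⊤ : Submodule Λ (M.X n))) := ⟨x, hx1, rfl⟩
    rw [Submodule.map_smul''] at hmem
    have hle : Submodule.map p (⊤ : Submodule Λ (M.X n)) ≤
        LinearMap.ker (τ.f n).hom := by
      rintro _ ⟨y, -, rfl⟩
      exact LinearMap.mem_ker.mpr (hτp y)
    have := Submodule.smul_mono le_rfl hle hmem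
    rwa [hKfix x hx] at this
  have hker := aux_pow_smul_mono (Ideal.jacobson (⊥ : Ideal Λ))
    (LinearMap.ker (τ.f n).hom) hKle m
  rw [hm] at hker
  simp only [Submodule.bot_smul, le_bot_iff] at hker
  exact ⟨LinearMap.ker_eq_bot.mp hker, hsurj⟩
end

section
/- Let T be a compactly generated triangulated category with all small coproducts. If M is a Σ-pure-injective object of T, then for every compact object X of T, every descending chain φ₁(M) ⊇ φ₂(M) ⊇ … of pp-definable subgroups of M of sort X eventually stabilises. -/
open CategoryTheory CategoryTheory.Limits

universe v u

namespace TriPurity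

variable {C : Type u} [Category.{v} C] [Preadditive C]

/-- The additive map `(X ⟶ f i) →+ (X ⟶ ∐ f)` given by composing with the coproduct
inclusion. -/
@[simps]

noncomputable def compIota {I : Type v} (f : I → C) [HasCoproduct f] (X : C) (i : I) :
    (X ⟶ f i) →+ (X ⟶ ∐ f) where
  toFun g := g ≫ Sigma.ι f i
  map_zero' := by simp
  map_add' _ _ := by simp [Preadditive.add_comp]

/-- An object `X` is compact if `Hom(X, −)` commutes with small coproducts: the
canonical map `⊕_i Hom(X, f i) → Hom(X, ∐ f)` is bijective for every small family. -/
def IsCompactObj (X : C) : Prop :=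
  ∀ (I : Type v) (_ : DecidableEq I) (f : I → C) (_ : HasCoproduct f),
    Function.Bijective (fun g : Π₀ i, (X ⟶ f i) =>
      DFinsupp.sumAddHom (compIota f X) g)

/-- A morphism `h : L ⟶ M` is a pure monomorphism if `Hom(X, h)` is injective for every
compact object `X`. -/
def IsPureMonoT {L M : C} (h : L ⟶ M) : Prop :=
  ∀ X : C, IsCompactObj X → Function.Injective (fun g : X ⟶ L => g ≫ h)

/-- An object `M` is pure-injective if every pure monomorphism out of `M` is a section. -/
def IsPureInjectiveT (M : C) : Prop :=
  ∀ (N : C) (h : M ⟶ N), IsPureMonoT h → ∃ r : N ⟶ M, h ≫ r = 𝟙 M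

/-- `M` is Σ-pure-injective if every small coproduct of copies of `M` is pure-injective. -/
def IsSigmaPureInjectiveT [HasCoproducts.{v} C] (M : C) : Prop :=
  ∀ I : Type v, IsPureInjectiveT (∐ fun _ : I => M)

/-- `T` is compactly generated: some set of compact objects detects nonzero objects. -/
def CompactlyGenerated (C : Type u) [Category.{v} C] [Preadditive C] : Prop :=
  ∃ G : Set C, (∀ X ∈ G, IsCompactObj X) ∧
    ∀ M : C, (∀ X ∈ G, ∀ f : X ⟶ M, f = 0) → IsZero M

end TriPurity

open TriPurity

section Aux
variable {C : Type u} [Category.{v} C] [Preadditive C]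

noncomputable def coprojT {I : Type v} [DecidableEq I] (M : C) [HasCoproduct fun _ : I => M]
    (k : I) : (∐ fun _ : I => M) ⟶ M :=
  Sigma.desc (fun j => if j = k then 𝟙 M else 0)

lemma iota_coprojT {I : Type v} [DecidableEq I] (M : C) [HasCoproduct fun _ : I => M]
    (j k : I) :
    Sigma.ι (fun _ : I => M) j ≫ coprojT M k = if j = k then 𝟙 M else 0 := by
  simp [coprojT]

lemma sumAddHom_comp_coprojT {I : Type v} [DecidableEq I] (M : C)
    [HasCoproduct fun _ : I => M] {W : C} (d : Π₀ _ : I, (W ⟶ M)) (k : I) :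
    DFinsupp.sumAddHom (compIota (fun _ : I => M) W) d ≫ coprojT M k = d k := by
  induction d using DFinsupp.induction with
  | h0 => simp
  | ha i x d _ _ ih =>
    rw [map_add, DFinsupp.sumAddHom_single, Preadditive.add_comp, ih, DFinsupp.add_apply,
      compIota_apply, Category.assoc, iota_coprojT]
    by_cases hik : i = k
    · subst hik; rw [if_pos rfl, Category.comp_id, DFinsupp.single_eq_same]
    · rw [if_neg hik, comp_zero, DFinsupp.single_eq_of_ne (Ne.symm hik)]

/-- Core construction: a Σ-pure-injective-style splitting forces one of the `b m`
to factor through `α (m+1)`. -/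
theorem core {C : Type u} [Category.{v} C] [Preadditive C] [HasZeroObject C]
    [HasShift C ℤ] [∀ n : ℤ, (CategoryTheory.shiftFunctor C n).Additive]
    [Pretriangulated C] [HasCoproducts.{v} C]
    (M : C) (hM : IsPureInjectiveT (∐ fun _ : ULift.{v} ℕ => M))
    (X : C) (hX : IsCompactObj X)
    (Z : ℕ → C) (α : ∀ m, X ⟶ Z m)
    (b : ℕ → (X ⟶ M))
    (gf : ∀ _ k : ℕ, Z _ ⟶ M)
    (hgf : ∀ m k, m ≤ k → b k = α m ≫ gf m k)
    (hgf0 : ∀ m k, k < m → gf m k = 0) :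
    ∃ m : ℕ, ∃ t : Z (m + 1) ⟶ M, b m = α (m + 1) ≫ t := by
  classical
  haveI : HasColimitsOfShape (Discrete WalkingPair) C :=
    hasColimitsOfShape_of_equivalence
      (Discrete.equivalence (Equiv.ulift.{v} (α := WalkingPair)))
  haveI : HasBinaryBiproducts C := HasBinaryBiproducts.of_hasBinaryCoproducts
  set N : C := ∐ fun _ : ULift.{v} ℕ => M with hN
  set YY : C := ∐ fun m : ULift.{v} ℕ => Z m.down with hYY
  set P₀ : C := N ⊞ (X ⊞ YY) with hP₀
  set πP : ℕ → (P₀ ⟶ M) := fun k =>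
    biprod.desc (coprojT M (ULift.up k))
      (biprod.desc (b k) (Sigma.desc fun m : ULift.{v} ℕ => gf m.down k)) with hπP
  set s : ℕ → (X ⟶ N) := fun m =>
    ∑ k ∈ Finset.range m, b k ≫ Sigma.ι (fun _ : ULift.{v} ℕ => M) (ULift.up k) with hs
  set c : X ⟶ P₀ := (biprod.inl : X ⟶ X ⊞ YY) ≫ biprod.inr with hc
  set ft : ∀ m : ℕ, Z m ⟶ P₀ := fun m =>
    (Sigma.ι (fun m : ULift.{v} ℕ => Z m.down) (ULift.up m) : Z m ⟶ YY) ≫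
      (biprod.inr : YY ⟶ X ⊞ YY) ≫ biprod.inr with hft
  set r : ℕ → (X ⟶ P₀) := fun m =>
    c - s m ≫ biprod.inl - α m ≫ ft m with hr
  -- basic computations
  have hsproj : ∀ m k : ℕ, s m ≫ coprojT M (ULift.up k) = if k < m then b k else 0 := by
    intro m k
    have h1 : ∀ j ∈ Finset.range m,
        b j ≫ Sigma.ι (fun _ : ULift.{v} ℕ => M) (ULift.up j) ≫ coprojT M (ULift.up k) =
          if j = k then b j else 0 := by
      intro j _
      rw [iota_coprojT]
      by_cases h : j = k
      · subst h; simp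
      · rw [if_neg (by simpa using h), if_neg h, comp_zero]
    calc s m ≫ coprojT M (ULift.up k)
        = ∑ j ∈ Finset.range m,
            b j ≫ Sigma.ι (fun _ : ULift.{v} ℕ => M) (ULift.up j) ≫ coprojT M (ULift.up k) := by
          rw [hs]; rw [Preadditive.sum_comp]; simp [Category.assoc]
      _ = ∑ j ∈ Finset.range m, if j = k then b j else 0 := Finset.sum_congr rfl h1
      _ = if k ∈ Finset.range m then b k else 0 := Finset.sum_ite_eq' _ _ _
      _ = if k < m then b k else 0 := by simp only [Finset.mem_range]
  have hcπ : ∀ k, c ≫ πP k = b k := by intro k; simp [hc, hπP]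
  have hftπ : ∀ m k, ft m ≫ πP k = gf m k := by intro m k; simp [hft, hπP]
  have hinlπ : ∀ k, (biprod.inl : N ⟶ P₀) ≫ πP k = coprojT M (ULift.up k) := by
    intro k; simp [hπP]
  have hrπ : ∀ m k, r m ≫ πP k = 0 := by
    intro m k
    rw [hr]
    simp only [Preadditive.sub_comp, Category.assoc, hcπ, hftπ, hinlπ, hsproj]
    by_cases h : k < m
    · rw [if_pos h, hgf0 m k h, comp_zero]; abel
    · rw [if_neg h, ← hgf m k (by omega)]; abel
  -- the cone over all the relations
  set R : (∐ fun _ : ULift.{v} ℕ => X) ⟶ P₀ :=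
    Sigma.desc (fun m : ULift.{v} ℕ => r m.down) with hR
  obtain ⟨P₁, q, w, hT⟩ := Pretriangulated.distinguished_cocone_triangle R
  have hRq : R ≫ q = 0 := Pretriangulated.comp_distTriang_mor_zero₁₂ _ hT
  have hrq : ∀ m : ℕ, r m ≫ q = 0 := by
    intro m
    have h := Sigma.ι (fun _ : ULift.{v} ℕ => X) (ULift.up m) ≫= hRq
    rw [comp_zero] at h
    rw [← Category.assoc, hR] at h
    simpa using h
  have hπfac : ∀ k : ℕ, ∃ π' : P₁ ⟶ M, πP k = q ≫ π' := by
    intro k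
    apply Pretriangulated.Triangle.yoneda_exact₂ _ hT (πP k)
    apply Sigma.hom_ext
    intro m
    change Sigma.ι (fun _ : ULift.{v} ℕ => X) m ≫ R ≫ πP k = Sigma.ι (fun _ : ULift.{v} ℕ => X) m ≫ 0
    rw [← Category.assoc, hR, comp_zero]
    simpa using hrπ m.down k
  choose π' hπ' using hπfac
  set ν : N ⟶ P₁ := (biprod.inl : N ⟶ P₀) ≫ q with hν
  have hνπ : ∀ k : ℕ, ν ≫ π' k = coprojT M (ULift.up k) := by
    intro k
    rw [hν, Category.assoc, ← hπ' k, hinlπ]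
  -- ν is a pure mono
  have hpure : IsPureMonoT ν := by
    intro W hW g g' hgg'
    have hgg2 : g ≫ ν = g' ≫ ν := hgg'
    obtain ⟨d, hd⟩ := (hW (ULift.{v} ℕ) inferInstance (fun _ => M) inferInstance).2 g
    obtain ⟨d', hd'⟩ := (hW (ULift.{v} ℕ) inferInstance (fun _ => M) inferInstance).2 g'
    have hdd : d = d' := by
      ext k
      have h1 := congrArg (fun u => u ≫ π' k.down) hgg2
      simp only [Category.assoc, hνπ] at h1
      have h2 : (ULift.up k.down : ULift.{v} ℕ) = k := rfl
      rw [h2, ← hd, ← hd'] at h1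
      simpa only [sumAddHom_comp_coprojT] using h1
    rw [← hd, ← hd', hdd]
  obtain ⟨ret, hret⟩ := hM P₁ ν hpure
  set x : X ⟶ N := c ≫ q ≫ ret with hx
  -- the congruences
  have hcong : ∀ m : ℕ, x - s m = α m ≫ (ft m ≫ q ≫ ret) := by
    intro m
    have h := congrArg (fun u => u ≫ ret) (hrq m)
    simp only [hr, Preadditive.sub_comp, Category.assoc, zero_comp] at h
    have hid : (biprod.inl : N ⟶ P₀) ≫ q ≫ ret = 𝟙 N := by
      rw [← Category.assoc, ← hν, hret]
    have h4 : s m ≫ (biprod.inl : N ⟶ P₀) ≫ q ≫ ret = s m := by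
      rw [hid, Category.comp_id]
    rw [h4, sub_sub, sub_eq_zero] at h
    rw [hx, h]
    exact add_sub_cancel_left _ _
  -- coordinates of x
  obtain ⟨dx, hdx⟩ := (hX (ULift.{v} ℕ) inferInstance (fun _ => M) inferInstance).2 x
  set m0 : ℕ := (dx.support.sup fun u => u.down) + 1 with hm0
  have hx0 : x ≫ coprojT M (ULift.up m0) = 0 := by
    rw [← hdx, sumAddHom_comp_coprojT]
    by_contra h
    have hmem : (ULift.up m0 : ULift.{v} ℕ) ∈ dx.support := DFinsupp.mem_support_iff.2 h
    have h5 : m0 ≤ dx.support.sup fun u => u.down := by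
      simpa using Finset.le_sup (f := fun u : ULift.{v} ℕ => u.down) hmem
    omega
  have h1 := congrArg (fun u => u ≫ coprojT M (ULift.up m0)) (hcong (m0+1))
  simp only [Preadditive.sub_comp, Category.assoc] at h1
  rw [hx0, hsproj (m0+1) m0, if_pos (Nat.lt_succ_self m0), zero_sub] at h1
  refine ⟨m0, -(ft (m0+1) ≫ q ≫ ret ≫ coprojT M (ULift.up m0)), ?_⟩
  rw [Preadditive.comp_neg, ← h1, neg_neg]
end Aux

/-- Let `T` be a compactly generated triangulated category with all small
coproducts.  If `M` is Σ-pure-injective, then for every compact object `X` every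
descending chain of pp-definable subgroups of `M` of sort `X` (images of
`Hom(Yₙ, M) → Hom(X, M)` along morphisms `aₙ : X ⟶ Yₙ` with `Yₙ` compact)
eventually stabilises. -/
theorem stmt12 {C : Type u} [Category.{v} C] [Preadditive C] [HasZeroObject C]
    [HasShift C ℤ] [∀ n : ℤ, (CategoryTheory.shiftFunctor C n).Additive]
    [Pretriangulated C] [HasCoproducts.{v} C]
    (hgen : CompactlyGenerated C)
    (M : C) (hM : IsSigmaPureInjectiveT M)
    (X : C) (hX : IsCompactObj X)
    (Y : ℕ → C) (hY : ∀ n, IsCompactObj (Y n))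
    (a : ∀ n, X ⟶ Y n)
    (hdesc : ∀ n, {g : X ⟶ M | ∃ f : Y (n + 1) ⟶ M, g = a (n + 1) ≫ f} ⊆
      {g : X ⟶ M | ∃ f : Y n ⟶ M, g = a n ≫ f}) :
    ∃ N : ℕ, ∀ n ≥ N, {g : X ⟶ M | ∃ f : Y n ⟶ M, g = a n ≫ f} =
      {g : X ⟶ M | ∃ f : Y N ⟶ M, g = a N ≫ f} := by
  classical
  let S : ℕ → Set (X ⟶ M) := fun n => {g : X ⟶ M | ∃ f : Y n ⟶ M, g = a n ≫ f}
  show ∃ N : ℕ, ∀ n ≥ N, S n = S N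
  by_contra hcon
  push_neg at hcon
  have hmono : ∀ i j : ℕ, i ≤ j → S j ⊆ S i := by
    intro i j hij
    induction hij with
    | refl => exact subset_rfl
    | step h ih => exact fun g hg => ih (hdesc _ hg)
  choose nxt hge hne using hcon
  let ns : ℕ → ℕ := fun m => nxt^[m] 0
  have hns : ∀ m, ns (m+1) = nxt (ns m) := fun m => Function.iterate_succ_apply' nxt m 0
  have hstep : ∀ m, ns m ≤ ns (m+1) := fun m => by rw [hns]; exact hge (ns m)
  have hmonons : Monotone ns := monotone_nat_of_le_succ hstep
  have hEx : ∀ m, ∃ g, g ∈ S (ns m) ∧ g ∉ S (ns (m+1)) := by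
    intro m
    have hsub : S (ns (m+1)) ⊆ S (ns m) := hmono _ _ (hstep m)
    have hne' : S (ns (m+1)) ≠ S (ns m) := by rw [hns]; exact hne (ns m)
    obtain ⟨g, hg1, hg2⟩ := Set.exists_of_ssubset (hsub.ssubset_of_ne hne')
    exact ⟨g, hg1, hg2⟩
  choose b hbmem hbnot using hEx
  have hfac : ∀ m k : ℕ, m ≤ k → ∃ f : Y (ns m) ⟶ M, b k = a (ns m) ≫ f := by
    intro m k hmk
    exact hmono _ _ (hmonons hmk) (hbmem k)
  let gf : ∀ m k : ℕ, Y (ns m) ⟶ M := fun m k =>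
    if h : m ≤ k then (hfac m k h).choose else 0
  have hgf : ∀ m k, m ≤ k → b k = a (ns m) ≫ gf m k := by
    intro m k h
    simp only [gf, dif_pos h]
    exact (hfac m k h).choose_spec
  have hgf0 : ∀ m k, k < m → gf m k = 0 := by
    intro m k h
    simp only [gf, dif_neg (by omega : ¬ m ≤ k)]
  obtain ⟨m, t, ht⟩ := core M (hM (ULift.{v} ℕ)) X hX (fun m => Y (ns m))
    (fun m => a (ns m)) b gf hgf hgf0
  exact hbnot m ⟨t, ht⟩
end

section
/- Every indecomposable Σ-pure-injective module over the Laurent polynomial ring k[T,T⁻¹] (k a field) is isomorphic to one of: an indecomposable finite-dimensional module, a Prüfer module (the injective envelope of a simple module), or the field of rational functions k(T). -/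
set_option linter.unusedSectionVars false
set_option maxHeartbeats 1000000


universe v

section

variable (R : Type v) [Ring R]

/-- A pure monomorphism of left `R`-modules (standard equational characterisation). -/
def IsPureMono {N P : Type v} [AddCommGroup N] [Module R N] [AddCommGroup P] [Module R P]
    (f : N →ₗ[R] P) : Prop :=
  Function.Injective f ∧
    ∀ (p q : ℕ) (A : Matrix (Fin p) (Fin q) R) (n : Fin p → N),
      (∃ x : Fin q → P, ∀ i, ∑ j, A i j • x j = f (n i)) →
      ∃ y : Fin q → N, ∀ i, ∑ j, A i j • y j = n i

/-- A left `R`-module `M` is pure-injective if it is injective with respect to pure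
monomorphisms. -/
def IsPureInjectiveModule (M : Type v) [AddCommGroup M] [Module R M] : Prop :=
  ∀ (N P : Type v) (_ : AddCommGroup N) (_ : Module R N) (_ : AddCommGroup P)
    (_ : Module R P) (f : N →ₗ[R] P), IsPureMono R f →
      ∀ g : N →ₗ[R] M, ∃ h : P →ₗ[R] M, h.comp f = g

/-- `M` is Σ-pure-injective if every direct sum of copies of `M` is pure-injective. -/
def IsSigmaPureInjectiveModule (M : Type v) [AddCommGroup M] [Module R M] : Prop :=
  ∀ I : Type v, IsPureInjectiveModule R (Π₀ _ : I, M)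

end

namespace Stmt16Aux

open Submodule

variable {R : Type*} [CommRing R] [IsDomain R] [IsPrincipalIdealRing R]
variable {M : Type*} [AddCommGroup M] [Module R M]

/-- A submodule is divisible if every element is divisible by every nonzero ring element
within the submodule. -/
def SubDiv (D : Submodule R M) : Prop := ∀ r : R, r ≠ 0 → ∀ m ∈ D, ∃ n ∈ D, r • n = m

theorem baer_of_div {Q : Type*} [AddCommGroup Q] [Module R Q]
    (h : ∀ r : R, r ≠ 0 → ∀ q : Q, ∃ n, r • n = q) : Module.Baer R Q := by
  intro I g
  obtain ⟨a, ha⟩ := (IsPrincipalIdealRing.principal I).principal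
  rw [Ideal.submodule_span_eq] at ha
  by_cases h0 : a = 0
  · refine ⟨0, fun x hx => ?_⟩
    have hx0 : x = 0 := by
      have hx' := hx
      rw [ha, h0, Ideal.span_singleton_eq_bot.mpr rfl, Ideal.mem_bot] at hx'
      exact hx'
    have hz : (⟨x, hx⟩ : I) = 0 := Subtype.ext hx0
    rw [hz, map_zero]
    rfl
  · have hmem : a ∈ I := by rw [ha]; exact Ideal.subset_span rfl
    obtain ⟨q', hq'⟩ := h a h0 (g ⟨a, hmem⟩)
    refine ⟨LinearMap.toSpanSingleton R Q q', fun x hx => ?_⟩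
    obtain ⟨c, hc⟩ := Ideal.mem_span_singleton'.mp (ha ▸ hx)
    have h1 : (⟨x, hx⟩ : I) = c • ⟨a, hmem⟩ := by
      apply Subtype.ext
      simp [← hc, smul_eq_mul]
    rw [h1, map_smul, ← hq', LinearMap.toSpanSingleton_apply, ← hc,
      mul_comm, mul_smul]
    rw [smul_comm]

theorem exists_retraction (D : Submodule R M) (h : SubDiv D) :
    ∃ ρ : M →ₗ[R] D, ∀ d : D, ρ (d : M) = d := by
  have hb : Module.Baer R D := baer_of_div (fun r hr q => by
    obtain ⟨n, hn, hrn⟩ := h r hr q q.2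
    exact ⟨⟨n, hn⟩, Subtype.ext hrn⟩)
  obtain ⟨ρ, hρ⟩ := hb.extension_property D.subtype Subtype.val_injective LinearMap.id
  exact ⟨ρ, fun d => by simpa using LinearMap.congr_fun hρ d⟩

theorem div_bot_or_top (hind : ∀ A B : Submodule R M, IsCompl A B → A = ⊥ ∨ B = ⊥)
    (D : Submodule R M) (h : SubDiv D) : D = ⊥ ∨ D = ⊤ := by
  obtain ⟨ρ, hρ⟩ := exists_retraction D h
  have hcompl : IsCompl D (LinearMap.ker ρ) := by
    constructor
    · rw [disjoint_iff]
      ext m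
      simp only [Submodule.mem_inf, Submodule.mem_bot, LinearMap.mem_ker]
      constructor
      · rintro ⟨hm, hk⟩
        have h1 := hρ ⟨m, hm⟩
        rw [show ((⟨m, hm⟩ : D) : M) = m from rfl, hk] at h1
        simpa using congrArg Subtype.val h1.symm
      · rintro rfl
        exact ⟨zero_mem _, map_zero ρ⟩
    · rw [codisjoint_iff, eq_top_iff]
      intro m _
      have hdecomp : m = ((ρ m : M)) + (m - (ρ m : M)) := by abel
      rw [hdecomp]
      refine Submodule.add_mem_sup (ρ m).2 ?_
      rw [LinearMap.mem_ker, map_sub]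
      rw [hρ (ρ m)]
      exact sub_self _
  rcases hind D _ hcompl with h1 | h1
  · exact Or.inl h1
  · right
    have := hcompl.2
    rw [h1, codisjoint_iff, sup_bot_eq] at this
    exact this

theorem coprime_of_not_dvd {p a : R} (hp : Prime p) (h : ¬ p ∣ a) : IsCoprime p a := by
  obtain ⟨d, hd⟩ := (IsPrincipalIdealRing.principal (Ideal.span {p, a})).principal
  rw [Ideal.submodule_span_eq] at hd
  have hpd : d ∣ p := Ideal.mem_span_singleton.mp
    (hd ▸ Ideal.subset_span (by simp : p ∈ ({p, a} : Set R)))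
  have had : d ∣ a := Ideal.mem_span_singleton.mp
    (hd ▸ Ideal.subset_span (by simp : a ∈ ({p, a} : Set R)))
  obtain ⟨e, he⟩ := hpd
  have hdu : IsUnit d := by
    rcases hp.irreducible.isUnit_or_isUnit he with h1 | h1
    · exact h1
    · exfalso
      apply h
      obtain ⟨u, rfl⟩ := h1
      obtain ⟨a', rfl⟩ := had
      exact ⟨(↑u⁻¹ : R) * a', by rw [he]; ring_nf; rw [mul_assoc, mul_comm (↑u : R), mul_assoc, u.inv_mul, mul_one]⟩
  have : Ideal.span {p, a} = ⊤ := by rw [hd, Ideal.span_singleton_eq_top]; exact hdu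
  have h1 : (1 : R) ∈ Ideal.span {p, a} := this ▸ trivial
  obtain ⟨α, β, hαβ⟩ := Ideal.mem_span_pair.mp h1
  exact ⟨α, β, hαβ⟩


theorem one_smul_decomp {α β : R} (h : α * β = 1) (s t : R) (m : M) :
    m = (α * s) • ((t:R) • m) + (β * t) • (s • m) → True := fun _ => trivial

theorem prime_power_bound (hnt : Nontrivial M)
    (hind : ∀ A B : Submodule R M, IsCompl A B → A = ⊥ ∨ B = ⊥) :
    ∀ r : R, r ≠ 0 → (∀ m : M, r • m = 0) →
      ∃ (p : R) (n : ℕ), Prime p ∧ ∀ m : M, p ^ n • m = 0 := by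
  intro r
  refine wellFounded_dvdNotUnit.induction
    (C := fun r => r ≠ 0 → (∀ m : M, r • m = 0) →
      ∃ (p : R) (n : ℕ), Prime p ∧ ∀ m : M, p ^ n • m = 0) r ?_
  clear r
  intro r IH hr0 hrM
  by_cases hur : IsUnit r
  · exfalso
    obtain ⟨u, rfl⟩ := hur
    obtain ⟨x, hx⟩ := exists_ne (0 : M)
    apply hx
    calc x = ((↑u⁻¹ : R) * ↑u) • x := by rw [u.inv_mul, one_smul]
    _ = (↑u⁻¹ : R) • ((↑u : R) • x) := by rw [mul_smul]
    _ = 0 := by rw [hrM x, smul_zero]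
  · obtain ⟨p, hirr, hdvd⟩ := WfDvdMonoid.exists_irreducible_factor hur hr0
    have hp : Prime p := hirr.prime
    obtain ⟨e, t, hpt, hrfact⟩ := WfDvdMonoid.max_power_factor hr0 hirr
    have he : e ≠ 0 := by
      rintro rfl
      rw [pow_zero, one_mul] at hrfact
      exact hpt (hrfact ▸ hdvd)
    have ht0 : t ≠ 0 := by
      rintro rfl
      rw [mul_zero] at hrfact
      exact hr0 hrfact
    by_cases hut : IsUnit t
    · refine ⟨p, e, hp, fun m => ?_⟩
      obtain ⟨u, rfl⟩ := hut
      calc p ^ e • m = (p ^ e * ((↑u : R) * (↑u⁻¹ : R))) • m := by rw [u.mul_inv, mul_one]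
      _ = (↑u⁻¹ : R) • (r • m) := by rw [hrfact]; rw [← mul_smul]; ring_nf
      _ = 0 := by rw [hrM m, smul_zero]
    · obtain ⟨α, β, hαβ⟩ := ((coprime_of_not_dvd hp hpt).pow_left : IsCoprime (p ^ e) t)
      set A := torsionBy R M (p ^ e) with hA
      set B := torsionBy R M t with hB
      have hcompl : IsCompl A B := by
        constructor
        · rw [disjoint_iff]
          ext m
          simp only [Submodule.mem_inf, Submodule.mem_bot, mem_torsionBy_iff]
          constructor
          · rintro ⟨h1, h2⟩
            calc m = (α * p ^ e + β * t) • m := by rw [hαβ, one_smul]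
            _ = α • (p ^ e • m) + β • (t • m) := by rw [add_smul, mul_smul, mul_smul]
            _ = 0 := by
                  rw [show p ^ e • m = 0 from h1, show t • m = 0 from h2,
                    smul_zero, smul_zero, add_zero]
          · rintro rfl; exact ⟨smul_zero _, smul_zero _⟩
        · rw [codisjoint_iff, eq_top_iff]
          intro m _
          have hdecomp : m = β • (t • m) + α • (p ^ e • m) := by
            calc m = (α * p ^ e + β * t) • m := by rw [hαβ, one_smul]
            _ = α • (p ^ e • m) + β • (t • m) := by rw [add_smul, mul_smul, mul_smul]
            _ = β • (t • m) + α • (p ^ e • m) := by abel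
          rw [hdecomp]
          refine Submodule.add_mem_sup ?_ ?_
          · rw [hA, mem_torsionBy_iff]
            have heq : p ^ e • β • t • m = β • ((p ^ e * t) • m) := by
              rw [← mul_smul, ← mul_smul, ← mul_smul]
              congr 1
              ring
            rw [heq, ← hrfact, hrM m, smul_zero]
          · rw [hB, mem_torsionBy_iff]
            have heq : t • α • p ^ e • m = α • ((p ^ e * t) • m) := by
              rw [← mul_smul, ← mul_smul, ← mul_smul]
              congr 1
              ring
            rw [heq, ← hrfact, hrM m, smul_zero]
      rcases hind A B hcompl with h1 | h1
      · have hBtop : B = ⊤ := by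
          have := hcompl.2
          rw [h1, codisjoint_iff, bot_sup_eq] at this
          exact this
        have htM : ∀ m : M, t • m = 0 := fun m => by
          have : m ∈ B := hBtop ▸ Submodule.mem_top
          rwa [hB, mem_torsionBy_iff] at this
        refine IH t ⟨ht0, p ^ e, ?_, by rw [hrfact, mul_comm]⟩ ht0 htM
        intro hpe
        exact hp.not_unit (isUnit_of_dvd_unit (dvd_pow_self p he) hpe)
      · have hAtop : A = ⊤ := by
          have := hcompl.2
          rw [h1, codisjoint_iff, sup_bot_eq] at this
          exact this
        refine ⟨p, e, hp, fun m => ?_⟩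
        have : m ∈ A := hAtop ▸ Submodule.mem_top
        rwa [hA, mem_torsionBy_iff] at this

theorem disjoint_smul_eq_zero {C D : Submodule R M} (h : Disjoint C D) {m : M}
    (h1 : m ∈ C) (h2 : m ∈ D) : m = 0 :=
  Submodule.disjoint_def.mp h m h1 h2

/-- Zorn-type argument: in the family of submodules disjoint from a given one, maximal
elements exist. -/
theorem exists_maximal_disjoint (D : Submodule R M) (C₀ : Submodule R M)
    (hC₀ : Disjoint C₀ D) :
    ∃ C : Submodule R M, C₀ ≤ C ∧ Disjoint C D ∧
      ∀ C' : Submodule R M, Disjoint C' D → C ≤ C' → C' = C := by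
  obtain ⟨C, hle, hmax⟩ := zorn_le_nonempty₀ {C : Submodule R M | Disjoint C D}
    (fun c hcs hchain y hy => by
      refine ⟨sSup c, ?_, fun z hz => le_sSup hz⟩
      rw [Set.mem_setOf_eq, disjoint_iff]
      rw [eq_bot_iff]
      intro m hm
      rw [Submodule.mem_inf] at hm
      obtain ⟨C', hC'c, hmC'⟩ := (Submodule.mem_sSup_of_directed ⟨y, hy⟩
        (hchain.directedOn)).mp hm.1
      have : Disjoint C' D := hcs hC'c
      rw [Submodule.mem_bot]
      exact disjoint_smul_eq_zero this hmC' hm.2) C₀ hC₀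
  exact ⟨C, hle, hmax.prop, fun C' h1 h2 => le_antisymm (hmax.le_of_ge h1 h2) h2⟩

theorem pow_pred_smul {p : R} {n : ℕ} (hn : n ≠ 0) (m : M) :
    p • p ^ (n - 1) • m = p ^ n • m := by
  have h : n - 1 + 1 = n := by omega
  rw [← mul_smul, ← pow_succ', h]

theorem cyclic_of_prime_power (hnt : Nontrivial M)
    (hind : ∀ A B : Submodule R M, IsCompl A B → A = ⊥ ∨ B = ⊥)
    {p : R} (hp : Prime p) {n : ℕ} (hkill : ∀ m : M, p ^ n • m = 0) :
    ∃ x : M, Submodule.span R {x} = ⊤ := by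
  classical
  -- minimal exponent
  have hex : ∃ k, ∀ m : M, p ^ k • m = 0 := ⟨n, hkill⟩
  set n₀ := Nat.find hex with hn₀
  have hbound : ∀ m : M, p ^ n₀ • m = 0 := Nat.find_spec hex
  have hn₀0 : n₀ ≠ 0 := by
    intro h
    obtain ⟨z, hz⟩ := exists_ne (0 : M)
    apply hz
    have := hbound z
    rwa [h, pow_zero, one_smul] at this
  have hxex : ∃ x : M, p ^ (n₀ - 1) • x ≠ 0 := by
    by_contra hcon
    push_neg at hcon
    exact Nat.find_min hex (Nat.pred_lt hn₀0) hcon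
  obtain ⟨x, hx⟩ := hxex
  have hx0 : x ≠ 0 := fun h => hx (by rw [h, smul_zero])
  -- Zorn
  obtain ⟨C, -, hCdisj, hCmax⟩ := exists_maximal_disjoint (Submodule.span R {x}) ⊥
    disjoint_bot_left
  -- claim : C ⊔ span {x} = ⊤
  have htop : C ⊔ Submodule.span R {x} = ⊤ := by
    by_contra hne
    have hm₀ : ∃ m₀ : M, m₀ ∉ C ⊔ Submodule.span R {x} := by
      by_contra hcon
      push_neg at hcon
      exact hne (Submodule.eq_top_iff'.mpr hcon)
    obtain ⟨m₀, hm₀⟩ := hm₀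
    set N := C ⊔ Submodule.span R {x} with hN
    have hexk : ∃ k, p ^ k • m₀ ∈ N := ⟨n₀, by rw [hbound]; exact zero_mem N⟩
    set k₀ := Nat.find hexk with hk₀
    have hk₀0 : k₀ ≠ 0 := by
      intro h
      have h2 := Nat.find_spec hexk
      rw [← hk₀, h, pow_zero, one_smul] at h2
      exact hm₀ h2
    set m := p ^ (k₀ - 1) • m₀ with hm
    have hmN : m ∉ N := Nat.find_min hexk (Nat.pred_lt hk₀0)
    have hpm : p • m ∈ N := by
      have heq : p • m = p ^ k₀ • m₀ := by
        rw [hm]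
        exact pow_pred_smul hk₀0 m₀
      rw [heq, hk₀]
      exact Nat.find_spec hexk
    obtain ⟨cc, hcc, z, hzspan, hsum⟩ := Submodule.mem_sup.mp hpm
    obtain ⟨a, rfl⟩ := Submodule.mem_span_singleton.mp hzspan
    -- (p^(n₀-1) * a) • x = 0
    have hpa0 : (p ^ (n₀ - 1) * a) • x = 0 := by
      have h1 : p ^ (n₀ - 1) • (p • m) = 0 := by
        rw [smul_comm, pow_pred_smul hn₀0, hbound]
      rw [← hsum, smul_add] at h1
      have h2 : (p ^ (n₀ - 1) * a) • x = -(p ^ (n₀ - 1) • cc) := by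
        rw [mul_smul, eq_neg_iff_add_eq_zero, add_comm]
        exact h1
      have hmemC : (p ^ (n₀ - 1) * a) • x ∈ C := by
        rw [h2]
        exact neg_mem (Submodule.smul_mem C _ hcc)
      have hmemS : (p ^ (n₀ - 1) * a) • x ∈ Submodule.span R {x} :=
        Submodule.mem_span_singleton.mpr ⟨_, rfl⟩
      exact disjoint_smul_eq_zero hCdisj hmemC hmemS
    -- p ∣ a
    have hpa : p ∣ a := by
      by_contra hnd
      obtain ⟨α, β, hαβ⟩ := coprime_of_not_dvd hp hnd
      apply hx
      have e1 : a • p ^ (n₀ - 1) • x = 0 := by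
        rw [← mul_smul, mul_comm, hpa0]
      have e2 : p • p ^ (n₀ - 1) • x = 0 := by
        rw [pow_pred_smul hn₀0, hbound]
      calc p ^ (n₀ - 1) • x = (α * p + β * a) • (p ^ (n₀ - 1) • x) := by
            rw [hαβ, one_smul]
      _ = α • (p • p ^ (n₀ - 1) • x) + β • (a • p ^ (n₀ - 1) • x) := by
            rw [add_smul, mul_smul, mul_smul]
      _ = 0 := by rw [e1, e2, smul_zero, smul_zero, add_zero]
    obtain ⟨b, rfl⟩ := hpa
    set m₁ := m - b • x with hm₁
    have hpm₁C : p • m₁ ∈ C := by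
      have : p • m₁ = cc := by
        rw [hm₁, smul_sub, ← hsum, mul_smul]
        abel
      rw [this]; exact hcc
    have hm₁N : m₁ ∉ N := by
      intro hmem
      apply hmN
      have : m = m₁ + b • x := by rw [hm₁]; abel
      rw [this]
      exact N.add_mem hmem (Submodule.mem_sup_right (Submodule.mem_span_singleton.mpr ⟨b, rfl⟩))
    have hC' : ¬ Disjoint (C ⊔ Submodule.span R {m₁}) (Submodule.span R {x}) := by
      intro hdisj
      have := hCmax _ hdisj le_sup_left
      apply hm₁N
      have hm₁C : m₁ ∈ C := by
        rw [← this]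
        exact Submodule.mem_sup_right (Submodule.mem_span_singleton_self m₁)
      exact Submodule.mem_sup_left hm₁C
    rw [Submodule.disjoint_def] at hC'
    push_neg at hC'
    obtain ⟨w, hwC', hwS, hw0⟩ := hC'
    obtain ⟨c₁, hc₁, z₁, hz₁, hw⟩ := Submodule.mem_sup.mp hwC'
    obtain ⟨t, rfl⟩ := Submodule.mem_span_singleton.mp hz₁
    by_cases hpt : p ∣ t
    · obtain ⟨t', rfl⟩ := hpt
      apply hw0
      have htm₁ : (p * t') • m₁ ∈ C := by
        rw [mul_comm, mul_smul]
        exact Submodule.smul_mem C t' hpm₁C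
      have : w ∈ C := by rw [← hw]; exact C.add_mem hc₁ htm₁
      exact disjoint_smul_eq_zero hCdisj this hwS
    · exfalso
      obtain ⟨α, β, hαβ⟩ := ((coprime_of_not_dvd hp hpt).symm.pow_right : IsCoprime t (p ^ n₀))
      apply hm₁N
      have hm₁eq : m₁ = α • (t • m₁) := by
        calc m₁ = (α * t + β * p ^ n₀) • m₁ := by rw [hαβ, one_smul]
        _ = α • (t • m₁) + β • (p ^ n₀ • m₁) := by rw [add_smul, mul_smul, mul_smul]
        _ = α • (t • m₁) := by rw [hbound, smul_zero, add_zero]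
      have htm₁N : t • m₁ ∈ N := by
        have : t • m₁ = w - c₁ := by rw [← hw]; abel
        rw [this]
        refine N.sub_mem ?_ (Submodule.mem_sup_left hc₁)
        exact Submodule.mem_sup_right hwS
      rw [hm₁eq]
      exact N.smul_mem α htm₁N
  -- conclude
  have hcompl : IsCompl C (Submodule.span R {x}) := ⟨hCdisj, codisjoint_iff.mpr htop⟩
  rcases hind _ _ hcompl with h1 | h1
  · refine ⟨x, ?_⟩
    rw [h1, bot_sup_eq] at htop
    exact htop
  · exfalso
    apply hx0
    rw [← Submodule.mem_bot (R := R), ← h1]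
    exact Submodule.mem_span_singleton_self x

theorem comb_smul {s₁ s₂ r₁ r₂ : R} {m₁ m₂ x : M} (h₁ : s₁ • m₁ = r₁ • x)
    (h₂ : s₂ • m₂ = r₂ • x) : (s₁ * s₂) • (m₁ + m₂) = (s₂ * r₁ + s₁ * r₂) • x := by
  calc (s₁ * s₂) • (m₁ + m₂) = (s₁ * s₂) • m₁ + (s₁ * s₂) • m₂ := smul_add _ _ _
  _ = (s₂ * s₁) • m₁ + (s₁ * s₂) • m₂ := by rw [mul_comm s₁ s₂]
  _ = s₂ • (s₁ • m₁) + s₁ • (s₂ • m₂) := by rw [mul_smul, mul_smul]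
  _ = s₂ • (r₁ • x) + s₁ • (r₂ • x) := by rw [h₁, h₂]
  _ = (s₂ * r₁) • x + (s₁ * r₂) • x := by rw [mul_smul, mul_smul]
  _ = (s₂ * r₁ + s₁ * r₂) • x := (add_smul _ _ _).symm

theorem torsionfree_case (hnt : Nontrivial M)
    (hind : ∀ A B : Submodule R M, IsCompl A B → A = ⊥ ∨ B = ⊥)
    (hdiv : ∀ r : R, r ≠ 0 → ∀ m : M, ∃ n, r • n = m)
    (htf : ∀ (r : R) (m : M), r • m = 0 → r = 0 ∨ m = 0) :
    Nonempty (M ≃ₗ[R] FractionRing R) := by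
  classical
  obtain ⟨x, hx0⟩ := exists_ne (0 : M)
  -- the "divisible hull" of x is everything
  set Dx : Submodule R M :=
    { carrier := {m | ∃ s : R, s ≠ 0 ∧ ∃ r : R, s • m = r • x}
      zero_mem' := ⟨1, one_ne_zero, 0, by simp⟩
      add_mem' := by
        rintro m₁ m₂ ⟨s₁, hs₁, r₁, h₁⟩ ⟨s₂, hs₂, r₂, h₂⟩
        exact ⟨s₁ * s₂, mul_ne_zero hs₁ hs₂, s₂ * r₁ + s₁ * r₂, comb_smul h₁ h₂⟩
      smul_mem' := by
        rintro c m ⟨s, hs, r, h⟩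
        refine ⟨s, hs, c * r, ?_⟩
        rw [smul_comm, h, mul_smul] } with hDx
  have hxDx : x ∈ Dx := ⟨1, one_ne_zero, 1, rfl⟩
  have hDxdiv : SubDiv Dx := by
    rintro r' hr' m ⟨s, hs, r, h⟩
    obtain ⟨n, hn⟩ := hdiv r' hr' m
    exact ⟨n, ⟨s * r', mul_ne_zero hs hr', r, by rw [mul_smul, hn, h]⟩, hn⟩
  have hDxtop : Dx = ⊤ := by
    rcases div_bot_or_top hind Dx hDxdiv with h | h
    · exfalso; apply hx0; rw [← Submodule.mem_bot (R := R), ← h]; exact hxDx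
    · exact h
  have hrep : ∀ m : M, ∃ sr : R × R, sr.1 ≠ 0 ∧ sr.1 • m = sr.2 • x := by
    intro m
    have : m ∈ Dx := hDxtop ▸ Submodule.mem_top
    obtain ⟨s, hs, r, h⟩ := this
    exact ⟨(s, r), hs, h⟩
  -- cancellation
  have hcan : ∀ (a b : R), a • x = b • x → a = b := by
    intro a b hab
    have : (a - b) • x = 0 := by rw [sub_smul, hab, sub_self]
    rcases htf _ _ this with h | h
    · exact sub_eq_zero.mp h
    · exact absurd h hx0
  set Q := FractionRing R with hQ
  have hmap0 : ∀ a : R, algebraMap R Q a = 0 ↔ a = 0 := by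
    intro a
    exact IsFractionRing.to_map_eq_zero_iff
  let f : M → Q := fun m =>
    algebraMap R Q (hrep m).choose.2 / algebraMap R Q (hrep m).choose.1
  have key : ∀ (m : M) (s r : R), s ≠ 0 → s • m = r • x →
      f m = algebraMap R Q r / algebraMap R Q s := by
    intro m s r hs h
    obtain ⟨hs', h'⟩ := (hrep m).choose_spec
    set s' := (hrep m).choose.1
    set r' := (hrep m).choose.2
    have hcross : s * r' = s' * r := by
      apply hcan
      rw [mul_smul, ← h', ← mul_smul, mul_comm s s', mul_smul, h, mul_smul]
    rw [show f m = algebraMap R Q r' / algebraMap R Q s' from rfl]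
    rw [div_eq_div_iff (by rw [Ne, hmap0]; exact hs') (by rw [Ne, hmap0]; exact hs)]
    rw [← map_mul, ← map_mul]
    congr 1
    calc r' * s = s * r' := mul_comm _ _
    _ = s' * r := hcross
    _ = r * s' := mul_comm _ _
  have hadd : ∀ m₁ m₂, f (m₁ + m₂) = f m₁ + f m₂ := by
    intro m₁ m₂
    obtain ⟨⟨s₁, r₁⟩, hs₁, h₁⟩ := hrep m₁
    obtain ⟨⟨s₂, r₂⟩, hs₂, h₂⟩ := hrep m₂
    have h3 : (s₁ * s₂) • (m₁ + m₂) = (s₂ * r₁ + s₁ * r₂) • x := comb_smul h₁ h₂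
    rw [key _ _ _ (mul_ne_zero hs₁ hs₂) h3, key _ _ _ hs₁ h₁, key _ _ _ hs₂ h₂]
    have hn1 : algebraMap R Q s₁ ≠ 0 := by rw [Ne, hmap0]; exact hs₁
    have hn2 : algebraMap R Q s₂ ≠ 0 := by rw [Ne, hmap0]; exact hs₂
    simp only [map_add, map_mul]
    rw [div_add_div _ _ hn1 hn2, mul_comm (algebraMap R Q s₂) (algebraMap R Q r₁)]
  have hsmul : ∀ (c : R) (m : M), f (c • m) = c • f m := by
    intro c m
    obtain ⟨⟨s, r⟩, hs, h⟩ := hrep m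
    have h3 : s • (c • m) = (c * r) • x := by rw [smul_comm, h, mul_smul]
    rw [key _ _ _ hs h3, key _ _ _ hs h, Algebra.smul_def, map_mul]
    rw [mul_div_assoc]
  have hinj : Function.Injective f := by
    intro m₁ m₂ hf
    obtain ⟨⟨s₁, r₁⟩, hs₁, h₁⟩ := hrep m₁
    obtain ⟨⟨s₂, r₂⟩, hs₂, h₂⟩ := hrep m₂
    dsimp only at hs₁ h₁ hs₂ h₂
    rw [key _ _ _ hs₁ h₁, key _ _ _ hs₂ h₂] at hf
    have hn1 : algebraMap R Q s₁ ≠ 0 := by rw [Ne, hmap0]; exact hs₁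
    have hn2 : algebraMap R Q s₂ ≠ 0 := by rw [Ne, hmap0]; exact hs₂
    rw [div_eq_div_iff hn1 hn2, ← map_mul, ← map_mul] at hf
    have hcross : r₁ * s₂ = r₂ * s₁ := by
      have := hf
      rwa [show (algebraMap R Q (r₁ * s₂) = algebraMap R Q (r₂ * s₁)) ↔ r₁ * s₂ = r₂ * s₁
        from ⟨fun hh => IsFractionRing.injective R Q hh, fun hh => by rw [hh]⟩] at this
    -- (s₁ * s₂) • (m₁ - m₂) = 0
    have hz : (s₁ * s₂) • (m₁ - m₂) = 0 := by
      have e1 : (s₁ * s₂) • m₁ = (s₂ * r₁) • x := by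
        rw [mul_comm s₁ s₂, mul_smul, h₁, ← mul_smul]
      have e2 : (s₁ * s₂) • m₂ = (s₁ * r₂) • x := by
        rw [mul_smul, h₂, ← mul_smul]
      rw [smul_sub, e1, e2, show s₂ * r₁ = r₁ * s₂ from mul_comm _ _,
        show s₁ * r₂ = r₂ * s₁ from mul_comm _ _, hcross, sub_self]
    rcases htf _ _ hz with h | h
    · exact absurd h (mul_ne_zero hs₁ hs₂)
    · exact sub_eq_zero.mp h
  have hsurj : Function.Surjective f := by
    intro q
    obtain ⟨r, s, hs, hq⟩ := IsFractionRing.div_surjective (A := R) q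
    have hs0 : s ≠ 0 := nonZeroDivisors.ne_zero hs
    obtain ⟨n, hn⟩ := hdiv s hs0 (r • x)
    exact ⟨n, by rw [key _ _ _ hs0 hn, hq]⟩
  exact ⟨LinearEquiv.ofBijective
    { toFun := f
      map_add' := hadd
      map_smul' := hsmul } ⟨hinj, hsurj⟩⟩

theorem torsion_case (hnt : Nontrivial M)
    (hind : ∀ A B : Submodule R M, IsCompl A B → A = ⊥ ∨ B = ⊥)
    (hdiv : ∀ r : R, r ≠ 0 → ∀ m : M, ∃ n, r • n = m)
    (m₀ : M) (hm₀ : m₀ ≠ 0) (r₀ : R) (hr₀ : r₀ ≠ 0) (hr₀m₀ : r₀ • m₀ = 0) :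
    ∃ S : Submodule R M, IsSimpleModule R ↥S ∧
      ∀ N : Submodule R M, N ≠ ⊥ → S ⊓ N ≠ ⊥ := by
  classical
  set J : Ideal R := LinearMap.ker (LinearMap.toSpanSingleton R M m₀) with hJ
  have hmemJ : ∀ r : R, r ∈ J ↔ r • m₀ = 0 := fun r => by
    rw [hJ, LinearMap.mem_ker, LinearMap.toSpanSingleton_apply]
  obtain ⟨a, ha⟩ := (IsPrincipalIdealRing.principal J).principal
  rw [Ideal.submodule_span_eq] at ha
  have ha0 : a ≠ 0 := by
    rintro rfl
    have h1 : r₀ ∈ J := (hmemJ r₀).mpr hr₀m₀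
    rw [ha, Ideal.span_singleton_eq_bot.mpr rfl, Ideal.mem_bot] at h1
    exact hr₀ h1
  have hanu : ¬ IsUnit a := by
    intro hu
    have h1 : (1 : R) ∈ J := by rw [ha, Ideal.span_singleton_eq_top.mpr hu]; trivial
    rw [hmemJ, one_smul] at h1
    exact hm₀ h1
  obtain ⟨p, hirr, hpa⟩ := WfDvdMonoid.exists_irreducible_factor hanu ha0
  have hp : Prime p := hirr.prime
  obtain ⟨a', rfl⟩ := hpa
  set y := a' • m₀ with hy
  have hamem : p * a' ∈ J := by rw [ha]; exact Ideal.subset_span rfl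
  have hpy : p • y = 0 := by
    rw [hy, ← mul_smul]
    exact (hmemJ _).mp hamem
  have ha'0 : a' ≠ 0 := fun h => ha0 (by rw [h, mul_zero])
  have hy0 : y ≠ 0 := by
    intro h
    obtain ⟨c, hc⟩ := Ideal.mem_span_singleton'.mp (ha ▸ (hmemJ a').mpr h)
    have h2 : a' * (c * p - 1) = 0 := by
      linear_combination hc
    rcases mul_eq_zero.mp h2 with h3 | h3
    · exact ha'0 h3
    · refine hp.not_unit (IsUnit.of_mul_eq_one c ?_)
      linear_combination h3
  -- the p-primary part is everything
  set Mp : Submodule R M :=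
    { carrier := {m | ∃ k : ℕ, p ^ k • m = 0}
      zero_mem' := ⟨0, by simp⟩
      add_mem' := by
        rintro m₁ m₂ ⟨k₁, h₁⟩ ⟨k₂, h₂⟩
        refine ⟨k₁ + k₂, ?_⟩
        have e1 : p ^ (k₁ + k₂) • m₁ = p ^ k₂ • p ^ k₁ • m₁ := by
          rw [← mul_smul, ← pow_add, add_comm k₂ k₁]
        have e2 : p ^ (k₁ + k₂) • m₂ = p ^ k₁ • p ^ k₂ • m₂ := by
          rw [← mul_smul, ← pow_add]
        rw [smul_add, e1, e2, h₁, h₂, smul_zero, smul_zero, add_zero]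
      smul_mem' := by
        rintro c m ⟨k, h⟩
        exact ⟨k, by rw [smul_comm, h, smul_zero]⟩ } with hMpdef
  have hMpdiv : SubDiv Mp := by
    rintro r' hr' m ⟨k, hk⟩
    obtain ⟨j, t, hpt, hfact⟩ := WfDvdMonoid.max_power_factor hr' hirr
    obtain ⟨α, β, hαβ⟩ := ((coprime_of_not_dvd hp hpt).symm.pow_right : IsCoprime t (p ^ k))
    have hm' : t • (α • m) = m := by
      have h1 : m = α • (t • m) + β • (p ^ k • m) := by
        calc m = (α * t + β * p ^ k) • m := by rw [hαβ, one_smul]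
        _ = α • (t • m) + β • (p ^ k • m) := by rw [add_smul, mul_smul, mul_smul]
      rw [hk, smul_zero, add_zero] at h1
      rw [smul_comm]
      exact h1.symm
    obtain ⟨w, hw⟩ := hdiv (p ^ j) (pow_ne_zero j hp.ne_zero) (α • m)
    refine ⟨w, ⟨k + j, ?_⟩, ?_⟩
    · rw [pow_add, mul_smul, hw, smul_comm, hk, smul_zero]
    · rw [hfact, mul_comm, mul_smul, hw]
      exact hm'
  have hyMp : y ∈ Mp := ⟨1, by rw [pow_one]; exact hpy⟩
  have hMptop : ∀ m : M, ∃ k : ℕ, p ^ k • m = 0 := by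
    rcases div_bot_or_top hind Mp hMpdiv with h | h
    · exfalso
      apply hy0
      rw [← Submodule.mem_bot (R := R), ← h]
      exact hyMp
    · intro m
      exact (h ▸ Submodule.mem_top : m ∈ Mp)
  -- the socle is cyclic, generated by y
  have hsocle : ∀ z : M, p • z = 0 → z ∈ Submodule.span R {y} := by
    intro z hpz
    by_contra hzny
    have hz0 : z ≠ 0 := fun h => hzny (h ▸ Submodule.zero_mem _)
    have hdisj0 : Disjoint (Submodule.span R {z}) (Submodule.span R {y}) := by
      rw [Submodule.disjoint_def]
      intro w hwz hwy
      obtain ⟨a1, rfl⟩ := Submodule.mem_span_singleton.mp hwz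
      by_cases hpa1 : p ∣ a1
      · obtain ⟨a2, rfl⟩ := hpa1
        rw [mul_comm, mul_smul, hpz, smul_zero]
      · exfalso
        obtain ⟨α, β, hαβ⟩ := coprime_of_not_dvd hp hpa1
        apply hzny
        have h1 : z = β • (a1 • z) := by
          calc z = (α * p + β * a1) • z := by rw [hαβ, one_smul]
          _ = α • (p • z) + β • (a1 • z) := by rw [add_smul, mul_smul, mul_smul]
          _ = β • (a1 • z) := by rw [hpz, smul_zero, zero_add]
        rw [h1]
        exact Submodule.smul_mem _ β hwy
    obtain ⟨C, hzleC, hCdisj, hCmax⟩ := exists_maximal_disjoint (Submodule.span R {y})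
      (Submodule.span R {z}) hdisj0
    have hzC : z ∈ C := hzleC (Submodule.mem_span_singleton_self z)
    have hpdiv : ∀ c ∈ C, ∃ c' ∈ C, p • c' = c := by
      intro c hc
      obtain ⟨nn, hnn⟩ := hdiv p hp.ne_zero c
      by_cases hd : Disjoint (C ⊔ Submodule.span R {nn}) (Submodule.span R {y})
      · have heq := hCmax _ hd le_sup_left
        refine ⟨nn, ?_, hnn⟩
        rw [← heq]
        exact Submodule.mem_sup_right (Submodule.mem_span_singleton_self nn)
      · rw [Submodule.disjoint_def] at hd
        push_neg at hd
        obtain ⟨w, hwC', hwy, hw0⟩ := hd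
        obtain ⟨c₁, hc₁, z₁, hz₁, hw⟩ := Submodule.mem_sup.mp hwC'
        obtain ⟨a1, rfl⟩ := Submodule.mem_span_singleton.mp hz₁
        by_cases hpa1 : p ∣ a1
        · exfalso
          obtain ⟨a2, rfl⟩ := hpa1
          apply hw0
          have hmem : w ∈ C := by
            rw [← hw]
            refine C.add_mem hc₁ ?_
            have h1 : (p * a2) • nn = a2 • c := by
              rw [mul_comm, mul_smul, hnn]
            rw [h1]
            exact C.smul_mem a2 hc
          exact disjoint_smul_eq_zero hCdisj hmem hwy
        · obtain ⟨k, hkc⟩ := hMptop c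
          have hknn : p ^ (k + 1) • nn = 0 := by
            rw [pow_succ', mul_smul, smul_comm, hnn, hkc]
          obtain ⟨α, β, hαβ⟩ := ((coprime_of_not_dvd hp hpa1).symm.pow_right :
            IsCoprime a1 (p ^ (k + 1)))
          have hnn2 : nn = α • w - α • c₁ := by
            calc nn = (α * a1 + β * p ^ (k + 1)) • nn := by rw [hαβ, one_smul]
            _ = α • (a1 • nn) + β • (p ^ (k + 1) • nn) := by rw [add_smul, mul_smul, mul_smul]
            _ = α • (a1 • nn) := by rw [hknn, smul_zero, add_zero]
            _ = α • (w - c₁) := by rw [show a1 • nn = w - c₁ from by rw [← hw]; abel]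
            _ = α • w - α • c₁ := smul_sub _ _ _
          have hc2 : c = p • (α • w) - p • (α • c₁) := by
            have h3 := congrArg (fun v => p • v) hnn2
            rw [hnn, smul_sub] at h3
            exact h3
          have hu : p • (α • w) = 0 := by
            refine disjoint_smul_eq_zero hCdisj ?_ ?_
            · have h4 : p • (α • w) = c + p • (α • c₁) := by rw [hc2]; abel
              rw [h4]
              exact C.add_mem hc (C.smul_mem p (C.smul_mem α hc₁))
            · exact Submodule.smul_mem _ p (Submodule.smul_mem _ α hwy)
          refine ⟨-(α • c₁), C.neg_mem (C.smul_mem α hc₁), ?_⟩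
          rw [smul_neg, hc2, hu, zero_sub]
    have hCdvd : SubDiv C := by
      intro r' hr' c hc
      obtain ⟨j, t, hpt, hfact⟩ := WfDvdMonoid.max_power_factor hr' hirr
      obtain ⟨k, hkc⟩ := hMptop c
      obtain ⟨α, β, hαβ⟩ := ((coprime_of_not_dvd hp hpt).symm.pow_right : IsCoprime t (p ^ k))
      have ht : t • (α • c) = c := by
        have h1 : c = α • (t • c) + β • (p ^ k • c) := by
          calc c = (α * t + β * p ^ k) • c := by rw [hαβ, one_smul]
          _ = α • (t • c) + β • (p ^ k • c) := by rw [add_smul, mul_smul, mul_smul]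
        rw [hkc, smul_zero, add_zero] at h1
        rw [smul_comm]
        exact h1.symm
      have hpow : ∀ (j' : ℕ) (cv : M), cv ∈ C → ∃ c' ∈ C, p ^ j' • c' = cv := by
        intro j'
        induction j' with
        | zero => exact fun cv hcv => ⟨cv, hcv, by rw [pow_zero, one_smul]⟩
        | succ j' IH =>
          intro cv hcv
          obtain ⟨c1, hc1, hcc1⟩ := hpdiv cv hcv
          obtain ⟨c2, hc2', hcc2⟩ := IH c1 hc1
          exact ⟨c2, hc2', by rw [pow_succ', mul_smul, hcc2, hcc1]⟩
      obtain ⟨c2, hc2m, hc2e⟩ := hpow j (α • c) (C.smul_mem α hc)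
      refine ⟨c2, hc2m, ?_⟩
      rw [hfact, mul_comm, mul_smul, hc2e]
      exact ht
    rcases div_bot_or_top hind C hCdvd with h | h
    · apply hz0
      rw [← Submodule.mem_bot (R := R), ← h]
      exact hzC
    · apply hy0
      refine disjoint_smul_eq_zero hCdisj ?_ (Submodule.mem_span_singleton_self y)
      rw [h]
      trivial
  refine ⟨Submodule.span R {y}, ?_, ?_⟩
  · rw [isSimpleModule_iff_isAtom]
    constructor
    · rw [Ne, Submodule.span_singleton_eq_bot]
      exact hy0
    · intro B hB
      by_contra hBbot
      obtain ⟨w, hwB, hw0⟩ := (Submodule.ne_bot_iff B).mp hBbot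
      have hwS : w ∈ Submodule.span R {y} := hB.le hwB
      obtain ⟨a1, rfl⟩ := Submodule.mem_span_singleton.mp hwS
      have hpa1 : ¬ p ∣ a1 := by
        rintro ⟨a2, rfl⟩
        apply hw0
        rw [mul_comm, mul_smul, hpy, smul_zero]
      obtain ⟨α, β, hαβ⟩ := coprime_of_not_dvd hp hpa1
      have hyB : y ∈ B := by
        have h1 : y = β • (a1 • y) := by
          calc y = (α * p + β * a1) • y := by rw [hαβ, one_smul]
          _ = α • (p • y) + β • (a1 • y) := by rw [add_smul, mul_smul, mul_smul]
          _ = β • (a1 • y) := by rw [hpy, smul_zero, zero_add]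
        rw [h1]
        exact B.smul_mem β hwB
      have hle : Submodule.span R {y} ≤ B := Submodule.span_le.mpr (by simpa using hyB)
      exact hB.2 hle
  · intro N hN
    obtain ⟨m, hmN, hm0⟩ := (Submodule.ne_bot_iff N).mp hN
    have hexk : ∃ k, p ^ k • m = 0 := hMptop m
    have hk0 : Nat.find hexk ≠ 0 := by
      intro h
      have h2 := Nat.find_spec hexk
      rw [h, pow_zero, one_smul] at h2
      exact hm0 h2
    set z := p ^ (Nat.find hexk - 1) • m with hzdef
    have hz0 : z ≠ 0 := Nat.find_min hexk (Nat.pred_lt hk0)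
    have hpz : p • z = 0 := by
      rw [hzdef, pow_pred_smul hk0]
      exact Nat.find_spec hexk
    rw [Submodule.ne_bot_iff]
    exact ⟨z, Submodule.mem_inf.mpr ⟨hsocle z hpz, N.smul_mem _ hmN⟩, hz0⟩


theorem no_strict_chain {R : Type v} [CommRing R] {M : Type v} [AddCommGroup M] [Module R M]
    (hsigma : IsSigmaPureInjectiveModule R M)
    (σ : ℕ → R) (hmul : ∀ n, ∃ t : R, σ (n + 1) = σ n * t)
    (c : ℕ → M) (hdvd : ∀ n, ∃ m, σ n • m = c n)
    (hnot : ∀ n, ¬ ∃ m, σ (n + 1) • m = c n) : False := by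
  classical
  set f : (Π₀ _ : ULift.{v} ℕ, M) →ₗ[R] (ULift.{v} ℕ → M) :=
    LinearMap.pi (fun i => DFinsupp.lapply i) with hf
  have hfapp : ∀ (e : Π₀ _ : ULift.{v} ℕ, M) (i : ULift.{v} ℕ), f e i = e i := fun e i => rfl
  have hfinj : Function.Injective f := by
    intro e₁ e₂ he
    ext i
    exact congrFun he i
  have hfpure : IsPureMono R f := by
    refine ⟨hfinj, ?_⟩
    rintro p q A n ⟨x, hx⟩
    set S : Finset (ULift.{v} ℕ) := Finset.univ.biUnion (fun i : Fin p => (n i).support)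
      with hS
    let y : Fin q → (Π₀ _ : ULift.{v} ℕ, M) := fun j => DFinsupp.mk S (fun cc => x j cc.1)
    have hy : ∀ (j : Fin q) (cc : ULift.{v} ℕ), y j cc = if cc ∈ S then x j cc else 0 := by
      intro j cc
      simp only [y, DFinsupp.mk_apply]
      split_ifs <;> rfl
    refine ⟨y, fun i => ?_⟩
    ext cc
    rw [DFinsupp.finset_sum_apply]
    have h2 : ∑ j, (A i j • y j) cc = ∑ j, A i j • (y j) cc := by
      refine Finset.sum_congr rfl fun j _ => ?_
      rw [DFinsupp.smul_apply]
    rw [h2]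
    by_cases hcc : cc ∈ S
    · have h3 := congrFun (hx i) cc
      rw [Finset.sum_apply] at h3
      simp only [Pi.smul_apply] at h3
      calc ∑ j, A i j • (y j) cc = ∑ j, A i j • x j cc := by
            refine Finset.sum_congr rfl fun j _ => by rw [hy, if_pos hcc]
      _ = n i cc := by rw [h3, hfapp]
    · have h4 : cc ∉ (n i).support := fun hc =>
        hcc (Finset.mem_biUnion.mpr ⟨i, Finset.mem_univ i, hc⟩)
      calc ∑ j, A i j • (y j) cc = 0 := by
            refine Finset.sum_eq_zero fun j _ => ?_
            rw [hy, if_neg hcc, smul_zero]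
      _ = n i cc := (DFinsupp.notMem_support_iff.mp h4).symm
  obtain ⟨h, hh⟩ := hsigma (ULift.{v} ℕ) _ _ inferInstance inferInstance inferInstance
    inferInstance f hfpure LinearMap.id
  -- divisibility chain
  have hstep : ∀ n i, n ≤ i → ∃ t, σ i = σ n * t := by
    intro n i hni
    refine Nat.le_induction ⟨1, (mul_one _).symm⟩ (fun i hi ih => ?_) i hni
    obtain ⟨t, ht⟩ := ih
    obtain ⟨t', ht'⟩ := hmul i
    exact ⟨t * t', by rw [ht', ht, mul_assoc]⟩
  have hdvd2 : ∀ n i, n ≤ i → ∃ m, σ n • m = c i := by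
    intro n i hni
    obtain ⟨t, ht⟩ := hstep n i hni
    obtain ⟨m, hm⟩ := hdvd i
    exact ⟨t • m, by rw [← hm, ht, mul_smul]⟩
  set u : ULift.{v} ℕ → M := fun i => c i.down with hu
  have hw : ∀ nn : ℕ, ∃ w : ULift.{v} ℕ → M, ∀ i : ULift.{v} ℕ,
      (nn ≤ i.down → σ nn • w i = c i.down) ∧ (i.down < nn → w i = 0) := by
    intro nn
    refine ⟨fun i => if h : nn ≤ i.down then (hdvd2 nn i.down h).choose else 0,
      fun i => ⟨?_, ?_⟩⟩
    · intro hle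
      dsimp only
      rw [dif_pos hle]
      exact (hdvd2 nn i.down hle).choose_spec
    · intro hlt
      dsimp only
      rw [dif_neg (by omega : ¬ nn ≤ i.down)]
  set Tn : ℕ → (Π₀ _ : ULift.{v} ℕ, M) :=
    fun nn => DFinsupp.mk ((Finset.range nn).image (ULift.up)) (fun cc => c cc.1.down) with hTn
  have hTn_apply : ∀ nn (i : ULift.{v} ℕ), (Tn nn) i = if i.down < nn then c i.down else 0 := by
    intro nn i
    rw [hTn, DFinsupp.mk_apply]
    by_cases hlt : i.down < nn
    · rw [dif_pos (Finset.mem_image.mpr ⟨i.down, Finset.mem_range.mpr hlt, rfl⟩), if_pos hlt]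
    · rw [dif_neg, if_neg hlt]
      intro hmem
      obtain ⟨jj, hjj, hjj2⟩ := Finset.mem_image.mp hmem
      apply hlt
      rw [← hjj2]
      exact Finset.mem_range.mp hjj
  have hkey : ∀ nn, ∃ v : Π₀ _ : ULift.{v} ℕ, M, h u = Tn nn + σ nn • v := by
    intro nn
    obtain ⟨w, hwspec⟩ := hw nn
    refine ⟨h w, ?_⟩
    have hdecomp : u = f (Tn nn) + σ nn • w := by
      funext i
      rw [Pi.add_apply, Pi.smul_apply, hfapp, hTn_apply]
      by_cases hi : i.down < nn
      · rw [if_pos hi, (hwspec i).2 hi, smul_zero, add_zero, hu]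
      · rw [if_neg hi, zero_add, (hwspec i).1 (by omega), hu]
    calc h u = h (f (Tn nn)) + σ nn • h w := by rw [hdecomp, map_add, map_smul]
    _ = Tn nn + σ nn • h w := by
          have := LinearMap.congr_fun hh (Tn nn)
          rw [LinearMap.comp_apply, LinearMap.id_apply] at this
          rw [this]
  set F : Finset ℕ := (h u).support.image (fun i : ULift.{v} ℕ => i.down) with hF
  set jj : ℕ := (F.sup id) + 1 with hjj
  have hjF : jj ∉ F := by
    intro hjmem
    have h2 := Finset.le_sup (f := id) hjmem
    simp only [id_eq] at h2
    omega
  have hju : (h u) (ULift.up jj) = 0 := by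
    rw [← DFinsupp.notMem_support_iff]
    intro hsup
    exact hjF (Finset.mem_image.mpr ⟨_, hsup, rfl⟩)
  obtain ⟨v, hv⟩ := hkey (jj + 1)
  apply hnot jj
  have heval := congrArg (fun g : Π₀ _ : ULift.{v} ℕ, M => g (ULift.up jj)) hv
  rw [hju, DFinsupp.add_apply, DFinsupp.smul_apply, hTn_apply,
    if_pos (Nat.lt_succ_self jj : (ULift.up jj).down < jj + 1)] at heval
  refine ⟨-(v (ULift.up jj)), ?_⟩
  have h5 : σ (jj + 1) • v (ULift.up jj) = - c jj := by
    rw [eq_neg_iff_add_eq_zero, add_comm]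
    exact heval.symm
  rw [smul_neg, h5, neg_neg]

theorem sigma_gives_min {R : Type v} [CommRing R] [IsDomain R] {M : Type v} [AddCommGroup M]
    [Module R M] (hsigma : IsSigmaPureInjectiveModule R M) :
    ∃ r : R, r ≠ 0 ∧ ∀ s : R, s ≠ 0 → ∀ m : M, ∃ m', (s * r) • m' = r • m := by
  by_contra hcon
  push_neg at hcon
  simp only [ne_eq, not_exists, not_forall, exists_prop] at hcon
  -- hcon : ∀ r, r ≠ 0 → ∃ s, s ≠ 0 ∧ ∃ m, ∀ m', (s * r) • m' ≠ r • m
  choose s hs m hm using hcon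
  let σ' : ℕ → {r : R // r ≠ 0} := fun n => Nat.rec ⟨1, one_ne_zero⟩
    (fun _ prev => ⟨prev.1 * s prev.1 prev.2, mul_ne_zero prev.2 (hs prev.1 prev.2)⟩) n
  set σ : ℕ → R := fun n => (σ' n).1 with hσ
  have hσ0 : ∀ n, σ n ≠ 0 := fun n => (σ' n).2
  have hmul : ∀ n, σ (n + 1) = σ n * s (σ n) (hσ0 n) := fun n => rfl
  set c : ℕ → M := fun n => σ n • m (σ n) (hσ0 n) with hc
  refine no_strict_chain hsigma σ (fun n => ⟨s (σ n) (hσ0 n), hmul n⟩) c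
    (fun n => ⟨m (σ n) (hσ0 n), rfl⟩) (fun n => ?_)
  rintro ⟨m', hm'⟩
  refine hm (σ n) (hσ0 n) m' ?_
  have hcn : c n = σ n • m (σ n) (hσ0 n) := rfl
  rw [← hcn, ← hm', hmul n, mul_comm]


open LaurentPolynomial

theorem laurent_fd {k : Type*} [Field k] {M : Type*} [AddCommGroup M]
    [Module (LaurentPolynomial k) M] [Module k M] [IsScalarTower k (LaurentPolynomial k) M]
    {g : LaurentPolynomial k} (hg : g ≠ 0) (x : M)
    (hspan : Submodule.span (LaurentPolynomial k) {x} = ⊤) (hgx : g • x = 0) :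
    FiniteDimensional k M := by
  classical
  have hCsmul : ∀ (a : k) (m : M), (C a : LaurentPolynomial k) • m = a • m := by
    intro a m
    rw [C_eq_algebraMap, algebraMap_smul]
  have hsingle : ∀ (i : ℤ) (a : k) (m : M),
      (AddMonoidAlgebra.single i a : LaurentPolynomial k) • m = a • ((T i : LaurentPolynomial k) • m) := by
    intro i a m
    rw [show (AddMonoidAlgebra.single i a : LaurentPolynomial k) = C a * T i from
      single_eq_C_mul_T a i, mul_smul, hCsmul]
  have hsum_repr : ∀ r : LaurentPolynomial k,
      r = ∑ i ∈ r.coeff.support, (AddMonoidAlgebra.single i (r.coeff i) : LaurentPolynomial k) := by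
    intro r
    conv_lhs => rw [← AddMonoidAlgebra.sum_coeff_single r]
    rfl
  have hne : g.coeff.support.Nonempty := Finsupp.support_nonempty_iff.mpr (mt AddMonoidAlgebra.coeff_eq_zero.mp hg)
  set a := g.coeff.support.min' hne with hadef
  set b := g.coeff.support.max' hne with hbdef
  have hab : a ≤ b := Finset.min'_le _ _ (Finset.max'_mem _ hne)
  by_cases habeq : a = b
  · -- single monomial: g is a unit, so x = 0 and M is trivial
    have hsupp : g.coeff.support = {a} := by
      refine Finset.eq_singleton_iff_unique_mem.mpr ⟨Finset.min'_mem _ hne, fun i hi => ?_⟩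
      exact le_antisymm (habeq ▸ Finset.le_max' _ _ hi) (Finset.min'_le _ _ hi)
    obtain ⟨hga, hgeq⟩ := Finsupp.support_eq_singleton.mp hsupp
    have hunit : IsUnit g := by
      rw [AddMonoidAlgebra.coeff_injective (hgeq.trans (AddMonoidAlgebra.coeff_single a (g.coeff a)).symm), single_eq_C_mul_T]
      exact IsUnit.mul ((isUnit_iff_ne_zero.mpr hga).map C) (isUnit_T a)
    obtain ⟨u, hu⟩ := hunit
    have hx0 : x = 0 := by
      calc x = ((↑u⁻¹ : LaurentPolynomial k) * ↑u) • x := by rw [u.inv_mul, one_smul]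
      _ = (↑u⁻¹ : LaurentPolynomial k) • (g • x) := by rw [mul_smul, hu]
      _ = 0 := by rw [hgx, smul_zero]
    have hall : ∀ m : M, m = 0 := by
      intro m
      have hm : m ∈ Submodule.span (LaurentPolynomial k) {x} := hspan ▸ Submodule.mem_top
      obtain ⟨r, rfl⟩ := Submodule.mem_span_singleton.mp hm
      rw [hx0, smul_zero]
    have hbt : (⊥ : Submodule k M) = ⊤ := by
      rw [Submodule.eq_top_iff']
      intro m
      rw [Submodule.mem_bot]
      exact hall m
    exact ⟨⟨∅, by rw [Finset.coe_empty, Submodule.span_empty, hbt]⟩⟩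
  · have hab' : a < b := lt_of_le_of_ne hab habeq
    set W : Submodule k M :=
      Submodule.span k ((fun i : ℤ => (T i : LaurentPolynomial k) • x) '' Set.Ico a b) with hW
    have hcb : g.coeff b ≠ 0 := Finsupp.mem_support_iff.mp (Finset.max'_mem _ hne)
    have hca : g.coeff a ≠ 0 := Finsupp.mem_support_iff.mp (Finset.min'_mem _ hne)
    -- the master relation
    have hrel : ∀ s : ℤ,
        ∑ i ∈ g.coeff.support, g.coeff i • ((T (s + i) : LaurentPolynomial k) • x) = 0 := by
      intro s
      have h1 : ((T s : LaurentPolynomial k) * g) • x = 0 := by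
        rw [mul_smul, hgx, smul_zero]
      have h2 : (T s : LaurentPolynomial k) * g
          = ∑ i ∈ g.coeff.support, (AddMonoidAlgebra.single (s + i) (g.coeff i) : LaurentPolynomial k) := by
        conv_lhs => rw [hsum_repr g, Finset.mul_sum]
        refine Finset.sum_congr rfl fun i _ => ?_
        have : (T s : LaurentPolynomial k) = AddMonoidAlgebra.single s 1 := rfl
        rw [this]
        rw [show (AddMonoidAlgebra.single s (1:k) : LaurentPolynomial k) * AddMonoidAlgebra.single i (g.coeff i)
          = AddMonoidAlgebra.single (s + i) ((1:k) * g.coeff i) from AddMonoidAlgebra.single_mul_single _ _ _ _]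
        rw [one_mul]
      calc ∑ i ∈ g.coeff.support, g.coeff i • ((T (s + i) : LaurentPolynomial k) • x)
          = ∑ i ∈ g.coeff.support, (AddMonoidAlgebra.single (s + i) (g.coeff i) : LaurentPolynomial k) • x := by
            exact Finset.sum_congr rfl fun i _ => (hsingle (s + i) (g.coeff i) x).symm
      _ = ((T s : LaurentPolynomial k) * g) • x := by rw [← Finset.sum_smul, ← h2]
      _ = 0 := h1
    -- isolating the top coefficient
    have hisob : ∀ s : ℤ, (T (s + b) : LaurentPolynomial k) • x
        = (-(g.coeff b)⁻¹) • ∑ i ∈ g.coeff.support.erase b, g.coeff i • ((T (s + i) : LaurentPolynomial k) • x) := by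
      intro s
      have h6 : g.coeff b • ((T (s + b) : LaurentPolynomial k) • x)
          = - ∑ i ∈ g.coeff.support.erase b, g.coeff i • ((T (s + i) : LaurentPolynomial k) • x) := by
        rw [eq_neg_iff_add_eq_zero, add_comm,
          Finset.sum_erase_add g.coeff.support _ (Finset.max'_mem _ hne)]
        exact hrel s
      calc (T (s + b) : LaurentPolynomial k) • x
          = (g.coeff b)⁻¹ • (g.coeff b • ((T (s + b) : LaurentPolynomial k) • x)) := by
            rw [smul_smul, inv_mul_cancel₀ hcb, one_smul]
      _ = (g.coeff b)⁻¹ • (- ∑ i ∈ g.coeff.support.erase b, g.coeff i • ((T (s + i) : LaurentPolynomial k) • x)) := by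
            rw [h6]
      _ = (-(g.coeff b)⁻¹) • ∑ i ∈ g.coeff.support.erase b, g.coeff i • ((T (s + i) : LaurentPolynomial k) • x) := by
            rw [smul_neg, neg_smul]
    have hisoa : ∀ s : ℤ, (T (s + a) : LaurentPolynomial k) • x
        = (-(g.coeff a)⁻¹) • ∑ i ∈ g.coeff.support.erase a, g.coeff i • ((T (s + i) : LaurentPolynomial k) • x) := by
      intro s
      have h6 : g.coeff a • ((T (s + a) : LaurentPolynomial k) • x)
          = - ∑ i ∈ g.coeff.support.erase a, g.coeff i • ((T (s + i) : LaurentPolynomial k) • x) := by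
        rw [eq_neg_iff_add_eq_zero, add_comm,
          Finset.sum_erase_add g.coeff.support _ (Finset.min'_mem _ hne)]
        exact hrel s
      calc (T (s + a) : LaurentPolynomial k) • x
          = (g.coeff a)⁻¹ • (g.coeff a • ((T (s + a) : LaurentPolynomial k) • x)) := by
            rw [smul_smul, inv_mul_cancel₀ hca, one_smul]
      _ = (g.coeff a)⁻¹ • (- ∑ i ∈ g.coeff.support.erase a, g.coeff i • ((T (s + i) : LaurentPolynomial k) • x)) := by
            rw [h6]
      _ = (-(g.coeff a)⁻¹) • ∑ i ∈ g.coeff.support.erase a, g.coeff i • ((T (s + i) : LaurentPolynomial k) • x) := by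
            rw [smul_neg, neg_smul]
    have hup : ∀ (nn : ℕ) (j : ℤ), a ≤ j → j < b + nn → (T j : LaurentPolynomial k) • x ∈ W := by
      intro nn
      induction nn with
      | zero =>
        intro j hja hjb
        refine Submodule.subset_span ⟨j, ?_, rfl⟩
        rw [Set.mem_Ico]
        constructor
        · exact hja
        · push_cast at hjb; omega
      | succ nn IH =>
        intro j hja hjb
        by_cases hcase : j < b + nn
        · exact IH j hja hcase
        · have hj : j = b + nn := by push_cast at hjb ⊢; omega
          have hTj : (T j : LaurentPolynomial k) • x = (T ((j - b) + b) : LaurentPolynomial k) • x := by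
            congr 2
            omega
          rw [hTj, hisob (j - b)]
          refine W.smul_mem _ (Submodule.sum_mem _ fun i hi => ?_)
          have hib : i ≠ b := Finset.ne_of_mem_erase hi
          have hisupp := Finset.mem_of_mem_erase hi
          have hia : a ≤ i := Finset.min'_le _ _ hisupp
          have hible : i ≤ b := Finset.le_max' _ _ hisupp
          refine W.smul_mem _ (IH (j - b + i) (by omega) (by push_cast; omega))
    have hdown : ∀ (nn : ℕ) (j : ℤ), a - nn ≤ j → j < b → (T j : LaurentPolynomial k) • x ∈ W := by
      intro nn
      induction nn with
      | zero =>
        intro j hja hjb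
        refine Submodule.subset_span ⟨j, ?_, rfl⟩
        rw [Set.mem_Ico]
        constructor
        · push_cast at hja; omega
        · exact hjb
      | succ nn IH =>
        intro j hja hjb
        by_cases hcase : a - nn ≤ j
        · exact IH j hcase hjb
        · have hj : j = a - nn - 1 := by push_cast at hja hcase ⊢; omega
          have hja' : j < a := by push_cast at hcase; omega
          have hTj : (T j : LaurentPolynomial k) • x = (T ((j - a) + a) : LaurentPolynomial k) • x := by
            congr 2
            omega
          rw [hTj, hisoa (j - a)]
          refine W.smul_mem _ (Submodule.sum_mem _ fun i hi => ?_)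
          have hib : i ≠ a := Finset.ne_of_mem_erase hi
          have hisupp := Finset.mem_of_mem_erase hi
          have hia : a ≤ i := Finset.min'_le _ _ hisupp
          have hible : i ≤ b := Finset.le_max' _ _ hisupp
          refine W.smul_mem _ (IH (j - a + i) (by push_cast; omega) (by omega))
    have hTW : ∀ j : ℤ, (T j : LaurentPolynomial k) • x ∈ W := by
      intro j
      by_cases hj : a ≤ j
      · exact hup ((j - b).toNat + 1) j hj (by push_cast; omega)
      · exact hdown ((a - j).toNat) j (by push_cast; omega) (by omega)
    have hWtop : ∀ m : M, m ∈ W := by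
      intro m
      have hm : m ∈ Submodule.span (LaurentPolynomial k) {x} := hspan ▸ Submodule.mem_top
      obtain ⟨r, rfl⟩ := Submodule.mem_span_singleton.mp hm
      have hrx : r • x = ∑ i ∈ r.coeff.support, r.coeff i • ((T i : LaurentPolynomial k) • x) := by
        conv_lhs => rw [hsum_repr r, Finset.sum_smul]
        exact Finset.sum_congr rfl fun i _ => hsingle i (r.coeff i) x
      rw [hrx]
      exact Submodule.sum_mem _ fun i _ => W.smul_mem _ (hTW i)
    have hWt : W = ⊤ := Submodule.eq_top_iff'.mpr hWtop
    refine ⟨?_⟩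
    rw [← hWt, hW]
    exact Submodule.fg_def.mpr ⟨_, Set.Finite.image _ (Set.finite_Ico a b), rfl⟩


theorem localization_pid {R S : Type*} [CommRing R] [CommRing S] [Algebra R S] (Mo : Submonoid R)
    [IsLocalization Mo S] [IsPrincipalIdealRing R] : IsPrincipalIdealRing S := by
  constructor
  intro J
  obtain ⟨g, hg⟩ := (IsPrincipalIdealRing.principal (Ideal.comap (algebraMap R S) J))
  refine ⟨⟨algebraMap R S g, ?_⟩⟩
  conv_lhs => rw [← IsLocalization.map_comap Mo S J]
  rw [Ideal.under_def, hg]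
  simp [Ideal.submodule_span_eq, Ideal.map_span]

theorem laurent_pid (k : Type*) [Field k] : IsPrincipalIdealRing (LaurentPolynomial k) := by
  haveI := LaurentPolynomial.isLocalization (R := k)
  exact localization_pid (Submonoid.powers (Polynomial.X : Polynomial k))

end Stmt16Aux

/-- Every indecomposable Σ-pure-injective module `M` over the Laurent
polynomial ring `k[T,T⁻¹]` (`k` a field) is isomorphic to one of: an indecomposable
finite-dimensional module; a Prüfer module (an injective module which is an injective
envelope of a simple submodule, i.e. has an essential simple submodule); or the
function field `k(T)`, the fraction field of `k[T,T⁻¹]`. -/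
theorem stmt16 (k : Type v) [Field k]
    (M : Type v) [AddCommGroup M] [Module (LaurentPolynomial k) M]
    (hind : Nontrivial M ∧ ∀ A B : Submodule (LaurentPolynomial k) M,
      IsCompl A B → A = ⊥ ∨ B = ⊥)
    (hsigma : IsSigmaPureInjectiveModule (LaurentPolynomial k) M) :
    -- finite-dimensional case
    (∃ (N : Type v) (_ : AddCommGroup N) (_ : Module (LaurentPolynomial k) N)
        (_ : Module k N) (_ : IsScalarTower k (LaurentPolynomial k) N)
        (_ : FiniteDimensional k N), Nonempty (M ≃ₗ[LaurentPolynomial k] N)) ∨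
    -- Prüfer case: `M` is the injective envelope of a simple module
    (Module.Injective (LaurentPolynomial k) M ∧
      ∃ S : Submodule (LaurentPolynomial k) M, IsSimpleModule (LaurentPolynomial k) ↥S ∧
        ∀ N : Submodule (LaurentPolynomial k) M, N ≠ ⊥ → S ⊓ N ≠ ⊥) ∨
    -- function field case
    Nonempty (M ≃ₗ[LaurentPolynomial k] FractionRing (LaurentPolynomial k)) := by
  classical
  haveI hdom : IsDomain (LaurentPolynomial k) := NoZeroDivisors.to_isDomain _
  haveI hpid : IsPrincipalIdealRing (LaurentPolynomial k) := Stmt16Aux.laurent_pid k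
  obtain ⟨hnt, hind2⟩ := hind
  obtain ⟨r₀, hr₀, hmin⟩ := Stmt16Aux.sigma_gives_min hsigma
  set D : Submodule (LaurentPolynomial k) M :=
    LinearMap.range (LinearMap.lsmul (LaurentPolynomial k) M r₀) with hD
  have hmemD : ∀ m : M, m ∈ D ↔ ∃ n, r₀ • n = m := by
    intro m
    simp only [hD, LinearMap.mem_range, LinearMap.lsmul_apply]
  have hDdiv : Stmt16Aux.SubDiv D := by
    rintro s hs m hm
    obtain ⟨n, hn⟩ := (hmemD m).mp hm
    obtain ⟨m', hm'⟩ := hmin s hs n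
    refine ⟨r₀ • m', (hmemD _).mpr ⟨m', rfl⟩, ?_⟩
    calc s • (r₀ • m') = (s * r₀) • m' := (mul_smul s r₀ m').symm
    _ = r₀ • n := hm'
    _ = m := hn
  rcases Stmt16Aux.div_bot_or_top hind2 D hDdiv with hDbot | hDtop
  · -- bounded case
    have hkill : ∀ m : M, r₀ • m = 0 := by
      intro m
      have hmem : r₀ • m ∈ D := (hmemD _).mpr ⟨m, rfl⟩
      rw [hDbot] at hmem
      simpa using hmem
    obtain ⟨p, nexp, hp, hpb⟩ := Stmt16Aux.prime_power_bound hnt hind2 r₀ hr₀ hkill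
    obtain ⟨x, hxspan⟩ := Stmt16Aux.cyclic_of_prime_power hnt hind2 hp hpb
    left
    letI : Module k M := Module.compHom M (algebraMap k (LaurentPolynomial k))
    haveI htower : IsScalarTower k (LaurentPolynomial k) M := ⟨fun c r m => by
      show (c • r) • m = (algebraMap k (LaurentPolynomial k) c) • (r • m)
      rw [Algebra.smul_def, mul_smul]⟩
    haveI hfd : FiniteDimensional k M :=
      Stmt16Aux.laurent_fd (pow_ne_zero nexp hp.ne_zero) x hxspan (hpb x)
    exact ⟨M, inferInstance, inferInstance, inferInstance, htower, hfd,
      ⟨LinearEquiv.refl _ _⟩⟩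
  · -- divisible case
    have hdiv : ∀ r : LaurentPolynomial k, r ≠ 0 → ∀ m : M, ∃ n, r • n = m := by
      intro r hr m
      have hm : m ∈ D := hDtop ▸ Submodule.mem_top
      obtain ⟨n, hn⟩ := (hmemD m).mp hm
      obtain ⟨m', hm'⟩ := hmin r hr n
      exact ⟨r₀ • m', by rw [← mul_smul, hm', hn]⟩
    by_cases htor : ∃ m : M, m ≠ 0 ∧ ∃ r : LaurentPolynomial k, r ≠ 0 ∧ r • m = 0
    · right; left
      obtain ⟨m₀, hm₀, r', hr', hrm⟩ := htor
      exact ⟨(Stmt16Aux.baer_of_div (fun r hr q => hdiv r hr q)).injective,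
        Stmt16Aux.torsion_case hnt hind2 hdiv m₀ hm₀ r' hr' hrm⟩
    · right; right
      push_neg at htor
      refine Stmt16Aux.torsionfree_case hnt hind2 hdiv ?_
      intro r m hrm
      by_contra hcon
      push_neg at hcon
      exact htor m hcon.2 r hcon.1 hrm
end
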